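/- Let P be a poset of type W of size 2n−2 having at most n−1 minimal elements. Then the number of isomorphism classes of downsets of P of size n satisfies d_n(P) = 1 + ⌊n/2⌋. -/

import Mathlib

/-!
Formalization framework: finite posets are bundled as `FinPartOrd.{0}`, downsets are
`Finset`s of elements, unlabelled posets are isomorphism classes (`UPoset`), and a witness
of a set `Γ` of unlabelled posets at size `n` is a finite poset whose set of size-`n`
downsets, up to isomorphism, is exactly `Γ`.
-/

attribute [local instance] Classical.propDecidable

noncomputable section

open Finset

/-- `D` is a downset of the finite poset `Q`. -/
def IsDownset (Q : FinPartOrd.{0}) (D : Finset ↥Q) : Prop :=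
  ∀ ⦃a b : ↥Q⦄, a ∈ D → b ≤ a → b ∈ D

/-- The induced subposet of `Q` on a finset `D` of its elements. -/
def subposet (Q : FinPartOrd.{0}) (D : Finset ↥Q) : FinPartOrd.{0} :=
  FinPartOrd.of {x : ↥Q // x ∈ D}

/-- The isomorphism setoid on finite posets. -/
def isoSetoid : Setoid FinPartOrd.{0} where
  r P Q := Nonempty (↥P ≃o ↥Q)
  iseqv := ⟨fun _ => ⟨OrderIso.refl _⟩, fun ⟨e⟩ => ⟨e.symm⟩, fun ⟨e⟩ ⟨f⟩ => ⟨e.trans f⟩⟩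

/-- Unlabelled finite posets: isomorphism classes of finite posets. -/
def UPoset := Quotient isoSetoid

/-- The isomorphism class of a finite poset. -/
def cls (P : FinPartOrd.{0}) : UPoset := Quotient.mk isoSetoid P

/-- The number of elements of a finite poset. -/
def size (Q : FinPartOrd.{0}) : ℕ := Fintype.card ↥Q

/-- The size of an isomorphism class of finite posets. -/
def usize : UPoset → ℕ :=
  Quotient.lift size fun _ _ h => h.elim fun e => Fintype.card_congr e.toEquiv

/-- `D_n(Q)` : the set of downsets of `Q` of size `n`, up to isomorphism. -/
def DSet (n : ℕ) (Q : FinPartOrd.{0}) : Set UPoset :=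
  {c | ∃ D : Finset ↥Q, IsDownset Q D ∧ D.card = n ∧ cls (subposet Q D) = c}

/-- `d_n(Q)` : the number of isomorphism classes of downsets of `Q` of size `n`. -/
def dNum (n : ℕ) (Q : FinPartOrd.{0}) : ℕ := (DSet n Q).ncard

/-- `D(Q)` : the set of nonempty downsets of `Q`, up to isomorphism. -/
def DAllSet (Q : FinPartOrd.{0}) : Set UPoset :=
  {c | ∃ D : Finset ↥Q, IsDownset Q D ∧ D.Nonempty ∧ cls (subposet Q D) = c}

/-- `Q` is a witness of the set `Γ` of unlabelled posets (at size `n`): the set of size-`n`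
downsets of `Q`, up to isomorphism, is exactly `Γ`. -/
def IsWitness (n : ℕ) (Γ : Set UPoset) (Q : FinPartOrd.{0}) : Prop := DSet n Q = Γ

/-- `Q` is a minimal witness of `Γ` : `Q` is a witness and no proper downset of `Q` is
itself a witness of `Γ`. -/
def IsMinimalWitness (n : ℕ) (Γ : Set UPoset) (Q : FinPartOrd.{0}) : Prop :=
  IsWitness n Γ Q ∧
    ∀ D : Finset ↥Q, IsDownset Q D → D ≠ Finset.univ → ¬IsWitness n Γ (subposet Q D)

/-- The height of an element: the number of elements of a longest chain whose maximum is `x`. -/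
def heightEl (Q : FinPartOrd.{0}) (x : ↥Q) : ℕ :=
  sSup {k | ∃ c : Finset ↥Q, IsChain (· ≤ ·) (c : Set ↥Q) ∧ x ∈ c ∧ (∀ y ∈ c, y ≤ x) ∧ c.card = k}

/-- The height of a finite poset: the number of elements of a longest chain. -/
def posetHeight (Q : FinPartOrd.{0}) : ℕ :=
  sSup {k | ∃ c : Finset ↥Q, IsChain (· ≤ ·) (c : Set ↥Q) ∧ c.card = k}

/-- A finite poset is Newtonian if every element of level `i` covers every element of
level `i - 1`. -/
def Newtonian (Q : FinPartOrd.{0}) : Prop :=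
  ∀ x y : ↥Q, heightEl Q y = heightEl Q x + 1 → x ⋖ y

/-- A finite poset is connected if it is nonempty and any two elements are joined by a
comparability path. -/
def ConnectedPoset (Q : FinPartOrd.{0}) : Prop :=
  Nonempty ↥Q ∧ ∀ x y : ↥Q, Relation.ReflTransGen (fun a b : ↥Q => a ≤ b ∨ b ≤ a) x y

/-- `x` is a maximal element of the subset `W` of `Q`. -/
def IsMaxIn (Q : FinPartOrd.{0}) (W : Finset ↥Q) (x : ↥Q) : Prop :=
  x ∈ W ∧ ∀ y ∈ W, x ≤ y → y = x

/-- `x` is a maximal element of the finite poset `R`. -/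
def IsMaxEl (R : FinPartOrd.{0}) (x : ↥R) : Prop := ∀ y, x ≤ y → y = x

/-- A poset of type 𝒲 : the disjoint union of two connected Newtonian posets that are not
isomorphic, but which only differ in one maximal element (they become isomorphic after the
removal of a suitable maximal element from each). -/
def TypeW (P : FinPartOrd.{0}) : Prop :=
  ∃ W₁ W₂ : Finset ↥P,
    W₁ ∪ W₂ = Finset.univ ∧ Disjoint W₁ W₂ ∧
    (∀ x ∈ W₁, ∀ y ∈ W₂, ¬x ≤ y ∧ ¬y ≤ x) ∧
    ConnectedPoset (subposet P W₁) ∧ ConnectedPoset (subposet P W₂) ∧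
    Newtonian (subposet P W₁) ∧ Newtonian (subposet P W₂) ∧
    ¬Nonempty (↥(subposet P W₁) ≃o ↥(subposet P W₂)) ∧
    ∃ x y, IsMaxIn P W₁ x ∧ IsMaxIn P W₂ y ∧
      Nonempty (↥(subposet P (W₁.erase x)) ≃o ↥(subposet P (W₂.erase y)))

/-- An antichain on `i` elements. -/
def AntichainFin (i : ℕ) : Type := Fin i

instance (i : ℕ) : PartialOrder (AntichainFin i) where
  le x y := x = y
  le_refl _ := rfl
  le_trans a b c h₁ h₂ := show a = c from (show a = b from h₁).trans (show b = c from h₂)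
  le_antisymm _ _ h _ := h

instance (i : ℕ) : Fintype (AntichainFin i) := inferInstanceAs (Fintype (Fin i))
instance (i : ℕ) : Fintype (WithTop (AntichainFin i)) :=
  inferInstanceAs (Fintype (Option (Fin i)))

/-- `Λ_i`: the poset with `i` minimal elements and one maximal element above all of them. -/
def Lambda (i : ℕ) : FinPartOrd.{0} := FinPartOrd.of (WithTop (AntichainFin i))

/-- `k` disjoint copies of a poset `α`. -/
def Copies (k : ℕ) (α : Type) : Type := Fin k × α

instance (k : ℕ) (α : Type) [PartialOrder α] : PartialOrder (Copies k α) where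
  le x y := x.1 = y.1 ∧ x.2 ≤ y.2
  le_refl _ := ⟨rfl, le_refl _⟩
  le_trans _ _ _ h₁ h₂ := ⟨h₁.1.trans h₂.1, le_trans h₁.2 h₂.2⟩
  le_antisymm x y h₁ h₂ := by
    obtain ⟨x₁, x₂⟩ := x
    obtain ⟨y₁, y₂⟩ := y
    obtain ⟨h, h'⟩ := h₁
    cases h
    exact congrArg _ (le_antisymm h' h₂.2)

instance (k : ℕ) (α : Type) [Fintype α] : Fintype (Copies k α) :=
  inferInstanceAs (Fintype (Fin k × α))

/-- `H_ℓ`: the poset whose connected components are `ℓ` copies of `Λ₂` and one copy of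
`Λ_{3(ℓ-1)}`. -/
def Hposet (ℓ : ℕ) : FinPartOrd.{0} :=
  FinPartOrd.of (Copies ℓ (WithTop (AntichainFin 2)) ⊕ WithTop (AntichainFin (3 * (ℓ - 1))))

/-- The poset `P₀` placed above a chain of `i` elements. -/
def withChain (P₀ : FinPartOrd.{0}) (i : ℕ) : FinPartOrd.{0} :=
  FinPartOrd.of (Fin i ⊕ₗ ↥P₀)

/-- The disjoint union of two finite posets. -/
def disjSum (P R : FinPartOrd.{0}) : FinPartOrd.{0} := FinPartOrd.of (↥P ⊕ ↥R)

/-- The poset `P_iR_i`: the disjoint union of `P₀` and `R₀` each placed above a chain of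
`i` elements. -/
def PRposet (P₀ R₀ : FinPartOrd.{0}) (i : ℕ) : FinPartOrd.{0} :=
  disjSum (withChain P₀ i) (withChain R₀ i)

/-- `C(P₀R₀) = |D(P₀)| + |D(R₀)| − |D(P₀) ∩ D(R₀)|`. -/
def CNum (P₀ R₀ : FinPartOrd.{0}) : ℕ :=
  (DAllSet P₀).ncard + (DAllSet R₀).ncard - (DAllSet P₀ ∩ DAllSet R₀).ncard

/-- The vertices of the exchange graph: the downsets of `Q` of size `n`, as actual subsets. -/
def EGVert (n : ℕ) (Q : FinPartOrd.{0}) : Type :=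
  {D : Finset ↥Q // IsDownset Q D ∧ D.card = n}

/-- The exchange graph `G_n(Q)`: two size-`n` downsets are adjacent iff they differ by
exactly one element. -/
def ExchangeGraph (n : ℕ) (Q : FinPartOrd.{0}) : SimpleGraph (EGVert n Q) where
  Adj X Y := (X.1 \ Y.1).card = 1 ∧ (Y.1 \ X.1).card = 1
  symm := ⟨fun X Y h => ⟨h.2, h.1⟩⟩
  loopless := ⟨fun X h => by
    simp only [Finset.sdiff_self, Finset.card_empty] at h
    exact absurd h.1 (by simp)⟩

/-- The downset `D` of `Q`, viewed as a poset, is isomorphic (a "copy of") `P`. -/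
def IsoTo (Q : FinPartOrd.{0}) (D : Finset ↥Q) (P : FinPartOrd.{0}) : Prop :=
  Nonempty (↥(subposet Q D) ≃o ↥P)

/-- A path `A :: M ++ [C]` in the exchange graph `G_n(Q)` whose first vertex is a copy of
`Pa`, whose last vertex is a copy of `Pb`, and all of whose internal vertices are copies of
`Pmid`. -/
def SpecialPath (n : ℕ) (Q : FinPartOrd.{0}) (Pa Pmid Pb : FinPartOrd.{0})
    (A : EGVert n Q) (M : List (EGVert n Q)) (C : EGVert n Q) : Prop :=
  List.Chain' (ExchangeGraph n Q).Adj (A :: M ++ [C]) ∧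
    IsoTo Q A.1 Pa ∧ IsoTo Q C.1 Pb ∧ ∀ v ∈ M, IsoTo Q v.1 Pmid

/-- `T` is an antichain in `Q`. -/
def IsAntichainIn (Q : FinPartOrd.{0}) (T : Finset ↥Q) : Prop :=
  ∀ x ∈ T, ∀ y ∈ T, x ≤ y → x = y

/-- The possible shapes of `A \ X` and `C \ X`: an antichain possibly together with a single
element below all of it and/or a single element above all of it, or a two-element chain
together with one incomparable element. -/
def GoodForm (Q : FinPartOrd.{0}) (S : Finset ↥Q) : Prop :=
  (∃ T : Finset ↥Q, IsAntichainIn Q T ∧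
    (S = T ∨
      (∃ b, b ∉ T ∧ S = insert b T ∧ ∀ x ∈ T, b < x) ∨
      (∃ t, t ∉ T ∧ S = insert t T ∧ ∀ x ∈ T, x < t) ∨
      (∃ b t, b ∉ T ∧ t ∉ T ∧ b ≠ t ∧ S = insert b (insert t T) ∧
        (∀ x ∈ T, b < x) ∧ ∀ x ∈ T, x < t))) ∨
  (∃ x y z : ↥Q, S = {x, y, z} ∧ x ≠ y ∧ x ≠ z ∧ y ≠ z ∧ x < y ∧
    ¬x ≤ z ∧ ¬z ≤ x ∧ ¬y ≤ z ∧ ¬z ≤ y)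

namespace TypeWProof

variable {Q Q' : FinPartOrd.{0}}

/-- The set of cardinalities of chains below `x`. -/
def hSet (Q : FinPartOrd.{0}) (x : ↥Q) : Set ℕ :=
  {k | ∃ c : Finset ↥Q, IsChain (· ≤ ·) (c : Set ↥Q) ∧ x ∈ c ∧ (∀ y ∈ c, y ≤ x) ∧ c.card = k}

lemma heightEl_eq_sSup (x : ↥Q) : heightEl Q x = sSup (hSet Q x) := rfl

lemma hSet_nonempty (x : ↥Q) : (hSet Q x).Nonempty :=
  ⟨1, {x}, by simp [Set.Subsingleton.isChain, Set.subsingleton_singleton], by simp, by simp, by simp⟩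

lemma hSet_bddAbove (x : ↥Q) : BddAbove (hSet Q x) :=
  ⟨Fintype.card ↥Q, fun k hk => by obtain ⟨c, -, -, -, rfl⟩ := hk; exact c.card_le_univ⟩

lemma heightEl_mem (x : ↥Q) : heightEl Q x ∈ hSet Q x :=
  Nat.sSup_mem (hSet_nonempty x) (hSet_bddAbove x)

lemma le_heightEl {x : ↥Q} {k : ℕ} (hk : k ∈ hSet Q x) : k ≤ heightEl Q x :=
  le_csSup (hSet_bddAbove x) hk

lemma one_le_heightEl (x : ↥Q) : 1 ≤ heightEl Q x :=
  le_heightEl ⟨{x}, by simp [Set.Subsingleton.isChain, Set.subsingleton_singleton], by simp, by simp, by simp⟩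

lemma heightEl_lt_heightEl {x y : ↥Q} (hxy : x < y) : heightEl Q x < heightEl Q y := by
  obtain ⟨c, hchain, hmem, hle, hcard⟩ := heightEl_mem x
  have hy : y ∉ c := fun hy => absurd (hle y hy) (not_le_of_gt hxy)
  have hk : heightEl Q x + 1 ∈ hSet Q y := by
    refine ⟨insert y c, ?_, by simp, ?_, ?_⟩
    · rw [Finset.coe_insert]
      exact hchain.insert (fun b hb _ => Or.inr ((hle b hb).trans hxy.le))
    · intro z hz
      rcases Finset.mem_insert.mp hz with rfl | hz
      · exact le_rfl
      · exact (hle z hz).trans hxy.le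
    · rw [Finset.card_insert_of_notMem hy, hcard]
  exact Nat.lt_of_succ_le (le_heightEl hk)

lemma heightEl_le_heightEl {x y : ↥Q} (hxy : x ≤ y) : heightEl Q x ≤ heightEl Q y := by
  rcases eq_or_lt_of_le hxy with rfl | h
  · exact le_rfl
  · exact (heightEl_lt_heightEl h).le

/-- Key step: an element of height `k+1` has an element of height `k` strictly below it. -/
lemma exists_heightEl_pred {y : ↥Q} (hy : 2 ≤ heightEl Q y) :
    ∃ z, z < y ∧ heightEl Q z + 1 = heightEl Q y := by
  obtain ⟨c, hchain, hmem, hle, hcard⟩ := heightEl_mem y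
  set c' := c.erase y with hc'
  have hcard' : c'.card + 1 = heightEl Q y := by
    rw [hc', Finset.card_erase_of_mem hmem, hcard]
    omega
  have hne : c'.Nonempty := Finset.card_pos.mp (by omega)
  obtain ⟨z, hz, hzmax⟩ := c'.exists_maximal hne
  have hzc : z ∈ c := Finset.mem_of_mem_erase hz
  have hzy : z < y := lt_of_le_of_ne (hle z hzc) (Finset.ne_of_mem_erase hz)
  have hzle : ∀ w ∈ c', w ≤ z := by
    intro w hw
    rcases eq_or_ne w z with rfl | hne'
    · exact le_rfl
    · rcases hchain (Finset.mem_coe.mpr (Finset.mem_of_mem_erase hw))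
        (Finset.mem_coe.mpr hzc) hne' with h | h
      · exact h
      · exact absurd (le_antisymm (hzmax hw h) h) hne'
  have h1 : c'.card ≤ heightEl Q z :=
    le_heightEl ⟨c', hchain.mono (by rw [hc', Finset.coe_erase]; exact Set.diff_subset), hz, hzle, rfl⟩
  have h2 : heightEl Q z < heightEl Q y := heightEl_lt_heightEl hzy
  exact ⟨z, hzy, by omega⟩

lemma exists_heightEl_eq {y : ↥Q} {i : ℕ} (h1 : 1 ≤ i) (h2 : i < heightEl Q y) :
    ∃ z, z < y ∧ heightEl Q z = i := by
  obtain ⟨k, hk⟩ : ∃ k, heightEl Q y - i = k + 1 := ⟨heightEl Q y - i - 1, by omega⟩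
  induction k generalizing y with
  | zero =>
    obtain ⟨z, hz, hz'⟩ := exists_heightEl_pred (y := y) (by omega)
    exact ⟨z, hz, by omega⟩
  | succ k ih =>
    obtain ⟨z, hz, hz'⟩ := exists_heightEl_pred (y := y) (by omega)
    obtain ⟨w, hw, hw'⟩ := ih (y := z) (by omega) (by omega)
    exact ⟨w, hw.trans hz, hw'⟩

lemma heightEl_eq_one_iff {x : ↥Q} : heightEl Q x = 1 ↔ ∀ y, y ≤ x → y = x := by
  constructor
  · intro h y hy
    by_contra hne
    have := heightEl_lt_heightEl (lt_of_le_of_ne hy hne)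
    have := one_le_heightEl y
    omega
  · intro h
    have h1 := one_le_heightEl x
    by_contra hne
    obtain ⟨z, hz, -⟩ := exists_heightEl_eq (y := x) (i := 1) le_rfl (by omega)
    exact absurd (h z hz.le) (ne_of_lt hz)

lemma le_heightEl_map (f : ↥Q ↪o ↥Q') (x : ↥Q) : heightEl Q x ≤ heightEl Q' (f x) := by
  obtain ⟨c, hchain, hmem, hle, hcard⟩ := heightEl_mem x
  refine le_heightEl ⟨c.image f, ?_, Finset.mem_image_of_mem f hmem, ?_, ?_⟩
  · rw [Finset.coe_image]
    exact hchain.image_of_map_rel _ _ _ (fun _ _ h => f.monotone h)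
  · rintro z hz
    obtain ⟨w, hw, rfl⟩ := Finset.mem_image.mp hz
    exact f.monotone (hle w hw)
  · rw [Finset.card_image_of_injective _ f.injective, hcard]

lemma heightEl_orderIso (e : ↥Q ≃o ↥Q') (x : ↥Q) : heightEl Q' (e x) = heightEl Q x := by
  refine le_antisymm ?_ (le_heightEl_map e.toOrderEmbedding x)
  simpa using le_heightEl_map e.symm.toOrderEmbedding (e x)

end TypeWProof

namespace TypeWProof

variable {Q : FinPartOrd.{0}}

/-- The subtype inclusion of a subposet, as an order embedding. -/
def subEmb (Q : FinPartOrd.{0}) (D : Finset ↥Q) : ↥(subposet Q D) ↪o ↥Q where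
  toFun := fun a => a.1
  inj' := Subtype.val_injective
  map_rel_iff' := Iff.rfl

lemma heightEl_subposet {D : Finset ↥Q} (hD : IsDownset Q D) {x : ↥Q} (hx : x ∈ D) :
    heightEl (subposet Q D) ⟨x, hx⟩ = heightEl Q x := by
  refine le_antisymm (le_heightEl_map (subEmb Q D) _) ?_
  obtain ⟨c, hchain, hmem, hle, hcard⟩ := heightEl_mem (Q := Q) x
  have hsub : ∀ z ∈ c, z ∈ D := fun z hz => hD hx (hle z hz)
  set f : {z // z ∈ c} → ↥(subposet Q D) := fun z => ⟨z.1, hsub z.1 z.2⟩ with hf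
  have hinj : Function.Injective f := by
    intro a b hab
    have h2 := congrArg Subtype.val hab
    exact Subtype.ext h2
  refine le_heightEl ⟨c.attach.image f, ?_, ?_, ?_, ?_⟩
  · intro a ha b hb hab
    simp only [Finset.coe_image, Set.mem_image, Finset.mem_coe, Finset.mem_attach] at ha hb
    obtain ⟨a', -, rfl⟩ := ha
    obtain ⟨b', -, rfl⟩ := hb
    have : a'.1 ≠ b'.1 := fun h => hab (congrArg f (Subtype.ext h))
    rcases hchain a'.2 b'.2 this with h | h
    · exact Or.inl h
    · exact Or.inr h
  · exact Finset.mem_image.mpr ⟨⟨x, hmem⟩, Finset.mem_attach _ _, rfl⟩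
  · intro z hz
    obtain ⟨z', -, rfl⟩ := Finset.mem_image.mp hz
    exact hle z'.1 z'.2
  · rw [Finset.card_image_of_injective _ hinj, Finset.card_attach, hcard]

lemma downset_erase {W : Finset ↥Q} (hW : IsDownset Q W) {x : ↥Q}
    (hx : IsMaxIn Q W x) : IsDownset Q (W.erase x) := by
  intro a b ha hb
  have haW : a ∈ W := Finset.mem_of_mem_erase ha
  have hbW : b ∈ W := hW haW hb
  refine Finset.mem_erase.mpr ⟨?_, hbW⟩
  rintro rfl
  exact (Finset.mem_erase.mp ha).1 (hx.2 a haW hb)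

lemma exists_downset_card {E : Finset ↥Q} (hE : IsDownset Q E) {s : ℕ} (hs : s ≤ E.card) :
    ∃ D, D ⊆ E ∧ IsDownset Q D ∧ D.card = s := by
  obtain ⟨d, hd⟩ : ∃ d, E.card - s = d := ⟨_, rfl⟩
  induction d generalizing E with
  | zero => exact ⟨E, le_refl E, hE, by omega⟩
  | succ d ih =>
    have hne : E.Nonempty := Finset.card_pos.mp (by omega)
    obtain ⟨m, hm, hmax⟩ := E.exists_maximal hne
    have hmax' : IsMaxIn Q E m := by
      refine ⟨hm, fun y hy hle => ?_⟩
      by_contra hne'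
      exact hne' (le_antisymm (hmax hy hle) hle)
    have herase := downset_erase hE hmax'
    have hcard : (E.erase m).card = E.card - 1 := Finset.card_erase_of_mem hm
    obtain ⟨D, hD1, hD2, hD3⟩ := ih herase (by omega) (by omega)
    exact ⟨D, hD1.trans (Finset.erase_subset _ _), hD2, hD3⟩

/-- In a Newtonian poset, smaller height implies strictly below. -/
lemma newtonian_lt_of_heightEl_lt {R : FinPartOrd.{0}} (hN : Newtonian R) {x y : ↥R}
    (h : heightEl R x < heightEl R y) : x < y := by
  rcases eq_or_lt_of_le (Nat.succ_le_of_lt h) with he | hlt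
  · exact (hN x y he.symm).lt
  · obtain ⟨z, hz, hz'⟩ := exists_heightEl_eq (y := y) (i := heightEl R x + 1)
      (by have := one_le_heightEl (Q := R) x; omega) hlt
    exact lt_trans (hN x z hz').lt hz

lemma newtonian_le_iff {R : FinPartOrd.{0}} (hN : Newtonian R) {x y : ↥R} :
    x ≤ y ↔ x = y ∨ heightEl R x < heightEl R y := by
  constructor
  · intro h
    rcases eq_or_lt_of_le h with rfl | h
    · exact Or.inl rfl
    · exact Or.inr (heightEl_lt_heightEl h)
  · rintro (rfl | h)
    · exact le_rfl
    · exact (newtonian_lt_of_heightEl_lt hN h).le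

/-- Ambient version for a Newtonian downset `W` of `Q`. -/
lemma newt_le_iff {W : Finset ↥Q} (hW : IsDownset Q W) (hN : Newtonian (subposet Q W))
    {x y : ↥Q} (hx : x ∈ W) (hy : y ∈ W) :
    x ≤ y ↔ x = y ∨ heightEl Q x < heightEl Q y := by
  have := newtonian_le_iff hN (x := ⟨x, hx⟩) (y := ⟨y, hy⟩)
  rw [heightEl_subposet hW hx, heightEl_subposet hW hy] at this
  exact this.trans (or_congr_left Subtype.mk_eq_mk)

/-- The number of elements of `D` of height `i`. -/
def levCount (Q : FinPartOrd.{0}) (D : Finset ↥Q) (i : ℕ) : ℕ :=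
  (D.filter (fun z => heightEl Q z = i)).card

lemma heightEl_le_card (x : ↥Q) : heightEl Q x ≤ Fintype.card ↥Q := by
  obtain ⟨c, -, -, -, hcard⟩ := heightEl_mem (Q := Q) x
  rw [← hcard]
  exact c.card_le_univ

lemma card_eq_sum_levCount (D : Finset ↥Q) :
    D.card = ∑ i ∈ Finset.range (Fintype.card ↥Q + 1), levCount Q D i := by
  rw [Finset.card_eq_sum_card_fiberwise (f := fun z => heightEl Q z)
    (t := Finset.range (Fintype.card ↥Q + 1))]
  · rfl
  · intro x hx
    exact Finset.mem_range.mpr (Nat.lt_succ_of_le (heightEl_le_card x))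

/-- If `D` misses an element of `W` of height `i` but contains an element of height `> i`,
contradiction (for `D ⊆ W` downsets of the Newtonian part `W`). -/
lemma levCount_eq_of_card_eq {W D D' : Finset ↥Q} (hW : IsDownset Q W)
    (hN : Newtonian (subposet Q W)) (hD : IsDownset Q D) (hD' : IsDownset Q D')
    (hDW : D ⊆ W) (hD'W : D' ⊆ W) (hcard : D.card = D'.card) :
    ∀ i, levCount Q D i = levCount Q D' i := by
  have key : ∀ D D' : Finset ↥Q, IsDownset Q D → IsDownset Q D' → D ⊆ W → D' ⊆ W →
      D.card = D'.card →
      ∀ i, levCount Q D i < levCount Q D' i →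
      (∀ j, j < i → levCount Q D j = levCount Q D' j) → False := by
    intro D D' hD hD' hDW hD'W hcard i hlt hprev
    have hmissing : ∃ z ∈ W, heightEl Q z = i ∧ z ∉ D := by
      by_contra hfull
      push_neg at hfull
      have hsub : D'.filter (fun z => heightEl Q z = i) ⊆
          D.filter (fun z => heightEl Q z = i) := by
        intro z hz
        rw [Finset.mem_filter] at hz ⊢
        exact ⟨hfull z (hD'W hz.1) hz.2, hz.2⟩
      exact absurd (Finset.card_le_card hsub) (not_le.mpr hlt)
    obtain ⟨z, hzW, hzi, hzD⟩ := hmissing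
    have hhigh : ∀ w ∈ D, heightEl Q w ≤ i := by
      intro w hw
      by_contra hgt
      push_neg at hgt
      have hzw : z < w := by
        have hle := (newt_le_iff hW hN hzW (hDW hw)).mpr (Or.inr (by omega))
        exact lt_of_le_of_ne hle (by rintro rfl; exact hzD hw)
      exact hzD (hD hw hzw.le)
    have hDsum : D.card = ∑ j ∈ Finset.range (i+1), levCount Q D j := by
      rw [Finset.card_eq_sum_card_fiberwise (f := fun z => heightEl Q z)
        (t := Finset.range (i+1))]
      · rfl
      · exact fun x hx => Finset.mem_range.mpr (Nat.lt_succ_of_le (hhigh x hx))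
    have hiN : i ≤ Fintype.card ↥Q := by
      have h1 : 0 < levCount Q D' i := by omega
      obtain ⟨w, hw⟩ := Finset.card_pos.mp h1
      rw [Finset.mem_filter] at hw
      rw [← hw.2]
      exact heightEl_le_card w
    have hD'sum : ∑ j ∈ Finset.range (i+1), levCount Q D' j ≤ D'.card := by
      rw [card_eq_sum_levCount D']
      exact Finset.sum_le_sum_of_subset
        (Finset.range_subset_range.mpr (by omega))
    have hsum : ∑ j ∈ Finset.range (i+1), levCount Q D j <
        ∑ j ∈ Finset.range (i+1), levCount Q D' j := by
      rw [Finset.sum_range_succ, Finset.sum_range_succ]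
      have : ∑ j ∈ Finset.range i, levCount Q D j = ∑ j ∈ Finset.range i, levCount Q D' j :=
        Finset.sum_congr rfl (fun j hj => hprev j (Finset.mem_range.mp hj))
      omega
    omega
  intro i
  by_contra hne
  have hex : ∃ i, levCount Q D i ≠ levCount Q D' i := ⟨i, hne⟩
  set i0 := Nat.find hex with hi0
  have hspec : levCount Q D i0 ≠ levCount Q D' i0 := Nat.find_spec hex
  have hmin : ∀ j, j < i0 → levCount Q D j = levCount Q D' j := by
    intro j hj
    by_contra hj'
    exact absurd (Nat.find_le hj') (not_le.mpr hj)
  rcases lt_or_gt_of_ne hspec with h | h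
  · exact key D D' hD hD' hDW hD'W hcard i0 h hmin
  · exact key D' D hD' hD hD'W hDW hcard.symm i0 h (fun j hj => (hmin j hj).symm)

end TypeWProof

namespace TypeWProof

variable {Q Q' : FinPartOrd.{0}}

lemma exists_key_map {α β ι : Type} [Nonempty β] [DecidableEq ι] (κ : α → ι) (κ' : β → ι)
    (D : Finset α) (D' : Finset β)
    (hcard : ∀ c : ι, (D.filter fun z => κ z = c).card = (D'.filter fun z => κ' z = c).card) :
    ∃ f : α → β, Set.InjOn f ↑D ∧ D.image f = D' ∧ ∀ a ∈ D, κ' (f a) = κ a := by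
  classical
  obtain ⟨N, hN⟩ : ∃ N, D.card = N := ⟨_, rfl⟩
  induction N generalizing D D' with
  | zero =>
    have hD : D = ∅ := Finset.card_eq_zero.mp hN
    have hD' : D' = ∅ := by
      rw [Finset.eq_empty_iff_forall_notMem]
      intro b hb
      have h0 := hcard (κ' b)
      rw [hD, Finset.filter_empty, Finset.card_empty] at h0
      have hb' : b ∈ D'.filter (fun z => κ' z = κ' b) := Finset.mem_filter.mpr ⟨hb, rfl⟩
      have := Finset.card_pos.mpr ⟨b, hb'⟩
      omega
    exact ⟨fun _ => Classical.arbitrary β, by simp [hD], by simp [hD, hD'], by simp [hD]⟩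
  | succ N ih =>
    obtain ⟨a, ha⟩ := Finset.card_pos.mp (show 0 < D.card by omega)
    have hpos : 0 < (D'.filter fun z => κ' z = κ a).card := by
      rw [← hcard (κ a)]
      exact Finset.card_pos.mpr ⟨a, Finset.mem_filter.mpr ⟨ha, rfl⟩⟩
    obtain ⟨b, hb⟩ := Finset.card_pos.mp hpos
    rw [Finset.mem_filter] at hb
    obtain ⟨hbD', hbκ⟩ := hb
    have hfilter : ∀ (γ : Type) (E : Finset γ) (g : γ → ι) (u : γ) (c : ι), u ∈ E →
        ((E.erase u).filter fun z => g z = c) = (E.filter fun z => g z = c).erase u := by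
      intro γ E g u c hu
      ext z
      simp only [Finset.mem_filter, Finset.mem_erase]
      tauto
    have hcard' : ∀ c : ι, ((D.erase a).filter fun z => κ z = c).card =
        ((D'.erase b).filter fun z => κ' z = c).card := by
      intro c
      rw [hfilter _ D κ a c ha, hfilter _ D' κ' b c hbD']
      by_cases hc : κ a = c
      · rw [Finset.card_erase_of_mem (Finset.mem_filter.mpr ⟨ha, hc⟩),
          Finset.card_erase_of_mem (Finset.mem_filter.mpr ⟨hbD', by rw [hbκ, hc]⟩), hcard c]
      · have h1 : a ∉ D.filter (fun z => κ z = c) := fun hmem => hc (Finset.mem_filter.mp hmem).2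
        have h2 : b ∉ D'.filter (fun z => κ' z = c) :=
          fun hmem => hc (hbκ.symm.trans (Finset.mem_filter.mp hmem).2)
        rw [Finset.erase_eq_of_notMem h1, Finset.erase_eq_of_notMem h2, hcard c]
    obtain ⟨f', hinj', him', hκ'⟩ := ih (D.erase a) (D'.erase b) hcard'
      (by rw [Finset.card_erase_of_mem ha]; omega)
    refine ⟨Function.update f' a b, ?_, ?_, ?_⟩
    · intro u hu v hv huv
      simp only [Finset.coe_erase, Finset.mem_coe] at hu hv
      by_cases hua : u = a <;> by_cases hva : v = a
      · rw [hua, hva]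
      · exfalso
        rw [hua, Function.update_self, Function.update_of_ne hva] at huv
        have : f' v ∈ D'.erase b := him' ▸ Finset.mem_image_of_mem f' (Finset.mem_erase.mpr ⟨hva, hv⟩)
        exact (Finset.mem_erase.mp this).1 huv.symm
      · exfalso
        rw [hva, Function.update_self, Function.update_of_ne hua] at huv
        have : f' u ∈ D'.erase b := him' ▸ Finset.mem_image_of_mem f' (Finset.mem_erase.mpr ⟨hua, hu⟩)
        exact (Finset.mem_erase.mp this).1 huv
      · rw [Function.update_of_ne hua, Function.update_of_ne hva] at huv
        exact hinj' (by simp [Finset.mem_erase, hua, hu]) (by simp [Finset.mem_erase, hva, hv]) huv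
    · have hD : D = insert a (D.erase a) := (Finset.insert_erase ha).symm
      rw [hD, Finset.image_insert, Function.update_self]
      have : (D.erase a).image (Function.update f' a b) = (D.erase a).image f' := by
        apply Finset.image_congr
        intro z hz
        exact Function.update_of_ne (Finset.mem_erase.mp hz).1 _ _
      rw [this, him', Finset.insert_erase hbD']
    · intro z hz
      by_cases hza : z = a
      · rw [hza, Function.update_self, hbκ]
      · rw [Function.update_of_ne hza]
        exact hκ' z (Finset.mem_erase.mpr ⟨hza, hz⟩)

lemma subposet_orderIso_of_map {D : Finset ↥Q} {D' : Finset ↥Q'}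
    (f : ↥Q → ↥Q') (hinj : Set.InjOn f ↑D) (him : D.image f = D')
    (hord : ∀ a ∈ D, ∀ b ∈ D, (a ≤ b ↔ f a ≤ f b)) :
    Nonempty (↥(subposet Q D) ≃o ↥(subposet Q' D')) := by
  have hmem : ∀ a : {x // x ∈ D}, f a.1 ∈ D' := fun a => him ▸ Finset.mem_image_of_mem f a.2
  let F : {x // x ∈ D} → {y // y ∈ D'} := fun a => ⟨f a.1, hmem a⟩
  have hbij : Function.Bijective F := by
    constructor
    · intro u v huv
      exact Subtype.ext (hinj (Finset.mem_coe.mpr u.2) (Finset.mem_coe.mpr v.2)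
        (congrArg Subtype.val huv))
    · intro b
      have hb : b.1 ∈ D.image f := him.symm ▸ b.2
      obtain ⟨a, haD, hfa⟩ := Finset.mem_image.mp hb
      exact ⟨⟨a, haD⟩, Subtype.ext hfa⟩
  exact ⟨{ toEquiv := Equiv.ofBijective F hbij,
           map_rel_iff' := fun {u v} => (hord u.1 u.2 v.1 v.2).symm }⟩

/-- Comparability-connectivity relation. -/
def compRel (Q : FinPartOrd.{0}) : ↥Q → ↥Q → Prop :=
  Relation.ReflTransGen (fun a b => a ≤ b ∨ b ≤ a)

/-- The number of elements whose connected component has exactly `v` elements. -/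
def ncount (Q : FinPartOrd.{0}) (v : ℕ) : ℕ :=
  (Finset.univ.filter fun x : ↥Q => (Finset.univ.filter (compRel Q x)).card = v).card

/-- The number of elements of height `i`. -/
def profInv (Q : FinPartOrd.{0}) (i : ℕ) : ℕ :=
  (Finset.univ.filter fun x : ↥Q => heightEl Q x = i).card

lemma compRel_orderIso (e : ↥Q ≃o ↥Q') {x y : ↥Q} :
    compRel Q x y ↔ compRel Q' (e x) (e y) := by
  constructor
  · intro h
    refine Relation.ReflTransGen.lift e (fun a b hab => ?_) _ _ h
    rcases hab with h' | h'
    · exact Or.inl (e.le_iff_le.mpr h')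
    · exact Or.inr (e.le_iff_le.mpr h')
  · intro h
    have h2 : compRel Q (e.symm (e x)) (e.symm (e y)) := by
      refine Relation.ReflTransGen.lift e.symm (fun a b hab => ?_) _ _ h
      rcases hab with h' | h'
      · exact Or.inl (e.symm.le_iff_le.mpr h')
      · exact Or.inr (e.symm.le_iff_le.mpr h')
    simpa using h2

lemma classCard_orderIso (e : ↥Q ≃o ↥Q') (x : ↥Q) :
    (Finset.univ.filter (compRel Q' (e x))).card = (Finset.univ.filter (compRel Q x)).card := by
  refine Finset.card_bij (fun a _ => e.symm a) ?_ ?_ ?_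
  · intro a ha
    rw [Finset.mem_filter] at ha ⊢
    refine ⟨Finset.mem_univ _, ?_⟩
    have := (compRel_orderIso e (x := x) (y := e.symm a)).symm
    rw [e.apply_symm_apply] at this
    exact this.mp ha.2
  · intro a _ b _ hab
    exact e.symm.injective hab
  · intro b hb
    rw [Finset.mem_filter] at hb
    exact ⟨e b, Finset.mem_filter.mpr ⟨Finset.mem_univ _, (compRel_orderIso e).mp hb.2⟩, by simp⟩

lemma ncount_orderIso (e : ↥Q ≃o ↥Q') (v : ℕ) : ncount Q v = ncount Q' v := by
  refine Finset.card_bij (fun a _ => e a) ?_ ?_ ?_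
  · intro a ha
    rw [Finset.mem_filter] at ha ⊢
    exact ⟨Finset.mem_univ _, by rw [classCard_orderIso e a]; exact ha.2⟩
  · intro a _ b _ hab
    exact e.injective hab
  · intro b hb
    rw [Finset.mem_filter] at hb
    refine ⟨e.symm b, Finset.mem_filter.mpr ⟨Finset.mem_univ _, ?_⟩, by simp⟩
    have := classCard_orderIso e (e.symm b)
    rw [e.apply_symm_apply] at this
    rw [this] at hb
    exact hb.2

lemma profInv_orderIso (e : ↥Q ≃o ↥Q') (i : ℕ) : profInv Q i = profInv Q' i := by
  refine Finset.card_bij (fun a _ => e a) ?_ ?_ ?_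
  · intro a ha
    rw [Finset.mem_filter] at ha ⊢
    exact ⟨Finset.mem_univ _, by rw [heightEl_orderIso e a]; exact ha.2⟩
  · intro a _ b _ hab
    exact e.injective hab
  · intro b hb
    rw [Finset.mem_filter] at hb
    refine ⟨e.symm b, Finset.mem_filter.mpr ⟨Finset.mem_univ _, ?_⟩, by simp⟩
    rw [← hb.2, ← heightEl_orderIso e (e.symm b), e.apply_symm_apply]

lemma card_filter_subtype (D : Finset ↥Q) (p : ↥Q → Prop) :
    ((Finset.univ : Finset {x // x ∈ D}).filter fun a => p a.1).card = (D.filter p).card := by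
  refine Finset.card_bij (fun a _ => a.1) ?_ ?_ ?_
  · intro a ha
    rw [Finset.mem_filter] at ha ⊢
    exact ⟨a.2, ha.2⟩
  · intro a _ b _ hab
    exact Subtype.ext hab
  · intro b hb
    rw [Finset.mem_filter] at hb
    exact ⟨⟨b, hb.1⟩, Finset.mem_filter.mpr ⟨Finset.mem_univ _, hb.2⟩, rfl⟩

lemma profInv_subposet {D : Finset ↥Q} (hD : IsDownset Q D) (i : ℕ) :
    profInv (subposet Q D) i = levCount Q D i := by
  unfold profInv levCount
  refine Finset.card_bij (fun (a : {x // x ∈ D}) _ => a.1) ?_ ?_ ?_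
  · intro a ha
    rw [Finset.mem_filter] at ha ⊢
    exact ⟨a.2, by rw [← heightEl_subposet hD a.2]; exact ha.2⟩
  · intro a _ b _ hab
    exact Subtype.ext hab
  · intro b hb
    rw [Finset.mem_filter] at hb
    exact ⟨⟨b, hb.1⟩, Finset.mem_filter.mpr ⟨Finset.mem_univ _,
      by rw [heightEl_subposet hD hb.1]; exact hb.2⟩, rfl⟩

/-- Comparability within a subset, at the ambient level. -/
def relIn (Q : FinPartOrd.{0}) (D : Finset ↥Q) : ↥Q → ↥Q → Prop :=
  fun u v => u ∈ D ∧ v ∈ D ∧ (u ≤ v ∨ v ≤ u)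

lemma compRel_subposet_iff {D : Finset ↥Q} (u v : {x // x ∈ D}) :
    compRel (subposet Q D) u v ↔ Relation.ReflTransGen (relIn Q D) u.1 v.1 := by
  constructor
  · intro h
    exact Relation.ReflTransGen.lift Subtype.val
      (fun a b hab => ⟨a.2, b.2, hab⟩) _ _ h
  · intro h
    have key : ∀ x y : ↥Q, Relation.ReflTransGen (relIn Q D) x y →
        ∀ (hx : x ∈ D) (hy : y ∈ D), compRel (subposet Q D) ⟨x, hx⟩ ⟨y, hy⟩ := by
      intro x y h
      induction h with
      | refl => intro hx hy; exact Relation.ReflTransGen.refl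
      | tail hstep hlast ih =>
        intro hx hy
        exact Relation.ReflTransGen.tail (ih hx hlast.1) hlast.2.2
    have := key u.1 v.1 h u.2 v.2
    simpa using this

lemma classCard_subposet (D : Finset ↥Q) (a : {x // x ∈ D}) :
    (Finset.univ.filter (compRel (subposet Q D) a)).card
      = (D.filter (Relation.ReflTransGen (relIn Q D) a.1)).card := by
  refine Finset.card_bij (fun (b : {x // x ∈ D}) _ => b.1) ?_ ?_ ?_
  · intro b hb
    rw [Finset.mem_filter] at hb ⊢
    exact ⟨b.2, (compRel_subposet_iff a b).mp hb.2⟩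
  · intro a _ b _ hab
    exact Subtype.ext hab
  · intro c hc
    rw [Finset.mem_filter] at hc
    exact ⟨⟨c, hc.1⟩, Finset.mem_filter.mpr ⟨Finset.mem_univ _,
      (compRel_subposet_iff a ⟨c, hc.1⟩).mpr hc.2⟩, rfl⟩

lemma ncount_subposet (D : Finset ↥Q) (v : ℕ) :
    ncount (subposet Q D) v =
      (D.filter fun u => (D.filter (Relation.ReflTransGen (relIn Q D) u)).card = v).card := by
  unfold ncount
  refine Finset.card_bij (fun (a : {x // x ∈ D}) _ => a.1) ?_ ?_ ?_
  · intro a ha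
    rw [Finset.mem_filter] at ha ⊢
    exact ⟨a.2, by rw [← classCard_subposet D a]; exact ha.2⟩
  · intro a _ b _ hab
    exact Subtype.ext hab
  · intro b hb
    rw [Finset.mem_filter] at hb
    exact ⟨⟨b, hb.1⟩, Finset.mem_filter.mpr ⟨Finset.mem_univ _,
      by rw [classCard_subposet D ⟨b, hb.1⟩]; exact hb.2⟩, rfl⟩

end TypeWProof

namespace TypeWProof

variable {Q : FinPartOrd.{0}}

lemma levCount_union {E₁ E₂ : Finset ↥Q} (hd : Disjoint E₁ E₂) (i : ℕ) :
    levCount Q (E₁ ∪ E₂) i = levCount Q E₁ i + levCount Q E₂ i := by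
  unfold levCount
  rw [Finset.filter_union]
  exact Finset.card_union_of_disjoint (Finset.disjoint_filter_filter hd)

lemma levCount_erase {E : Finset ↥Q} {u : ↥Q} (hu : u ∈ E) (i : ℕ) :
    levCount Q (E.erase u) i =
      if heightEl Q u = i then levCount Q E i - 1 else levCount Q E i := by
  unfold levCount
  have hfe : (E.erase u).filter (fun z => heightEl Q z = i) =
      (E.filter (fun z => heightEl Q z = i)).erase u := by
    ext z
    simp only [Finset.mem_filter, Finset.mem_erase]
    tauto
  rw [hfe]
  by_cases hc : heightEl Q u = i
  · rw [if_pos hc, Finset.card_erase_of_mem (Finset.mem_filter.mpr ⟨hu, hc⟩)]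
  · have h1 : u ∉ E.filter (fun z => heightEl Q z = i) :=
      fun hmem => hc (Finset.mem_filter.mp hmem).2
    rw [if_neg hc, Finset.erase_eq_of_notMem h1]

lemma rtg_symm {α : Type} {r : α → α → Prop} (hs : ∀ a b, r a b → r b a) {a b : α}
    (h : Relation.ReflTransGen r a b) : Relation.ReflTransGen r b a := by
  induction h with
  | refl => exact Relation.ReflTransGen.refl
  | tail hab hcd ih => exact Relation.ReflTransGen.head (hs _ _ hcd) ih

/-- Transport a downset contained in `V` through an order isomorphism of subposets,
preserving all level counts and the cardinality. -/
lemma transport {V V' : Finset ↥Q} (hV : IsDownset Q V) (hV' : IsDownset Q V')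
    (φ : ↥(subposet Q V) ≃o ↥(subposet Q V')) {E : Finset ↥Q} (hE : E ⊆ V)
    (hEd : IsDownset Q E) :
    ∃ E', E' ⊆ V' ∧ IsDownset Q E' ∧ E'.card = E.card ∧
      ∀ i, levCount Q E' i = levCount Q E i := by
  classical
  set E' : Finset ↥Q := V'.filter (fun b => ∃ hb : b ∈ V', (φ.symm ⟨b, hb⟩).1 ∈ E) with hE'
  have hmemE' : ∀ b (hb : b ∈ V'), (b ∈ E' ↔ (φ.symm ⟨b, hb⟩).1 ∈ E) := by
    intro b hb
    rw [hE', Finset.mem_filter]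
    constructor
    · rintro ⟨-, hb', hmem⟩
      exact hmem
    · intro hmem
      exact ⟨hb, hb, hmem⟩
  have hE'sub : E' ⊆ V' := Finset.filter_subset _ _
  have hφval : ∀ (a : ↥Q) (ha : a ∈ V), ((φ ⟨a, ha⟩).1 ∈ E' ↔ a ∈ E) := by
    intro a ha
    rw [hmemE' _ (φ ⟨a, ha⟩).2]
    have : φ.symm ⟨(φ ⟨a, ha⟩).1, (φ ⟨a, ha⟩).2⟩ = ⟨a, ha⟩ := by
      have h1 : (⟨(φ ⟨a, ha⟩).1, (φ ⟨a, ha⟩).2⟩ : {z // z ∈ V'}) = φ ⟨a, ha⟩ := rfl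
      rw [h1]; exact φ.symm_apply_apply _
    rw [this]
  have hht : ∀ (a : ↥Q) (ha : a ∈ V), heightEl Q ((φ ⟨a, ha⟩).1) = heightEl Q a := by
    intro a ha
    have h1 : heightEl Q ((φ ⟨a, ha⟩).1) = heightEl (subposet Q V') (φ ⟨a, ha⟩) :=
      (heightEl_subposet hV' (φ ⟨a, ha⟩).2).symm
    rw [h1]; exact (heightEl_orderIso φ _).trans (heightEl_subposet hV ha)
  refine ⟨E', hE'sub, ?_, ?_, ?_⟩
  · intro a b ha hb
    have haV' : a ∈ V' := hE'sub ha
    have hbV' : b ∈ V' := hV' haV' hb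
    rw [hmemE' a haV'] at ha
    rw [hmemE' b hbV']
    have hle : φ.symm ⟨b, hbV'⟩ ≤ φ.symm ⟨a, haV'⟩ := φ.symm.monotone hb
    exact hEd ha hle
  · refine (Finset.card_bij (fun a ha => (φ ⟨a, hE ha⟩).1) ?_ ?_ ?_).symm
    · intro a ha
      exact (hφval a (hE ha)).mpr ha
    · intro a ha b hb hab
      have h4 : φ ⟨a, hE ha⟩ = φ ⟨b, hE hb⟩ := Subtype.ext hab
      have := φ.injective h4
      exact congrArg Subtype.val this
    · intro b hb
      have hbV' : b ∈ V' := hE'sub hb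
      have hmem : (φ.symm ⟨b, hbV'⟩).1 ∈ E := (hmemE' b hbV').mp hb
      refine ⟨(φ.symm ⟨b, hbV'⟩).1, hmem, ?_⟩
      have h5 : φ ⟨(φ.symm ⟨b, hbV'⟩).1, hE hmem⟩ = (⟨b, hbV'⟩ : {z // z ∈ V'}) := by
        exact φ.apply_symm_apply _
      exact congrArg Subtype.val h5
  · intro i
    refine (Finset.card_bij (fun a ha => (φ ⟨a, hE (Finset.mem_filter.mp ha).1⟩).1) ?_ ?_ ?_).symm
    · intro a ha
      obtain ⟨haE, hai⟩ := Finset.mem_filter.mp ha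
      exact Finset.mem_filter.mpr ⟨(hφval a (hE haE)).mpr haE, by rw [hht a (hE haE)]; exact hai⟩
    · intro a ha b hb hab
      have h4 : φ ⟨a, hE (Finset.mem_filter.mp ha).1⟩ = φ ⟨b, hE (Finset.mem_filter.mp hb).1⟩ :=
        Subtype.ext hab
      have := φ.injective h4
      exact congrArg Subtype.val this
    · intro b hb
      obtain ⟨hbE', hbi⟩ := Finset.mem_filter.mp hb
      have hbV' : b ∈ V' := hE'sub hbE'
      have hmem : (φ.symm ⟨b, hbV'⟩).1 ∈ E := (hmemE' b hbV').mp hbE'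
      refine ⟨(φ.symm ⟨b, hbV'⟩).1, Finset.mem_filter.mpr ⟨hmem, ?_⟩, ?_⟩
      · have h3 : heightEl Q ((φ.symm ⟨b, hbV'⟩).1) = heightEl Q b := by
          have h1 : heightEl Q ((φ.symm ⟨b, hbV'⟩).1) = heightEl (subposet Q V) (φ.symm ⟨b, hbV'⟩) :=
            (heightEl_subposet hV (φ.symm ⟨b, hbV'⟩).2).symm
          rw [h1]; exact (heightEl_orderIso φ _).symm.trans ((congrArg (heightEl (subposet Q V')) (φ.apply_symm_apply _)).trans (heightEl_subposet hV' hbV'))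
        rw [h3]; exact hbi
      · have h5 : φ ⟨(φ.symm ⟨b, hbV'⟩).1, hE hmem⟩ = (⟨b, hbV'⟩ : {z // z ∈ V'}) := by
          exact φ.apply_symm_apply _
        exact congrArg Subtype.val h5

end TypeWProof

namespace TypeWProof

set_option maxHeartbeats 1000000 in
lemma main (n : ℕ) (P : FinPartOrd.{0})
    (W₁ W₂ : Finset ↥P)
    (hunion : W₁ ∪ W₂ = Finset.univ) (hdisj : Disjoint W₁ W₂)
    (hincomp : ∀ a ∈ W₁, ∀ b ∈ W₂, ¬a ≤ b ∧ ¬b ≤ a)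
    (hconn₁ : ConnectedPoset (subposet P W₁))
    (hnewt₁ : Newtonian (subposet P W₁)) (hnewt₂ : Newtonian (subposet P W₂))
    (hniso : ¬Nonempty (↥(subposet P W₁) ≃o ↥(subposet P W₂)))
    (x y : ↥P) (hx : IsMaxIn P W₁ x) (hy : IsMaxIn P W₂ y)
    (ψ : ↥(subposet P (W₁.erase x)) ≃o ↥(subposet P (W₂.erase y)))
    (hsize : size P = 2 * n - 2)
    (hminel : (Finset.univ.filter fun z : ↥P => ∀ w : ↥P, w ≤ z → w = z).card ≤ n - 1)
    (hxy : heightEl P x ≤ heightEl P y) :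
    dNum n P = 1 + n / 2 := by
  classical
  have hmemtot : ∀ z : ↥P, z ∈ W₁ ∨ z ∈ W₂ := fun z => by
    have hz := Finset.mem_univ z
    rw [← hunion] at hz
    exact Finset.mem_union.mp hz
  have hnotboth : ∀ z : ↥P, z ∈ W₁ → z ∈ W₂ → False := fun z h1 h2 =>
    Finset.disjoint_left.mp hdisj h1 h2
  have hdown₁ : IsDownset P W₁ := by
    intro a b ha hb
    rcases hmemtot b with h | h
    · exact h
    · exact absurd hb (hincomp a ha b h).2
  have hdown₂ : IsDownset P W₂ := by
    intro a b ha hb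
    rcases hmemtot b with h | h
    · exact absurd hb (hincomp b h a ha).1
    · exact h
  have hde₁ : IsDownset P (W₁.erase x) := downset_erase hdown₁ hx
  have hde₂ : IsDownset P (W₂.erase y) := downset_erase hdown₂ hy
  have hxW : x ∈ W₁ := hx.1
  have hyW : y ∈ W₂ := hy.1
  haveI : Nonempty ↥P := ⟨x⟩
  -- cardinalities
  have hcardsum : W₁.card + W₂.card = 2 * n - 2 := by
    have h1 : (W₁ ∪ W₂).card = W₁.card + W₂.card := Finset.card_union_of_disjoint hdisj
    rw [hunion, Finset.card_univ] at h1
    unfold size at hsize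
    omega
  obtain ⟨F₂, hF₂sub, hF₂down, hF₂card, hF₂lev⟩ :=
    transport hde₁ hde₂ ψ (le_refl (W₁.erase x)) hde₁
  obtain ⟨F₁, hF₁sub, -, hF₁card, -⟩ := transport hde₂ hde₁ ψ.symm (le_refl (W₂.erase y)) hde₂
  have hErc : (W₁.erase x).card = (W₂.erase y).card := by
    have h1 : F₂.card ≤ (W₂.erase y).card := Finset.card_le_card hF₂sub
    have h2 : F₁.card ≤ (W₁.erase x).card := Finset.card_le_card hF₁sub
    omega
  have hF₂eq : F₂ = W₂.erase y := Finset.eq_of_subset_of_card_le hF₂sub (by omega)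
  have hpsiLev : ∀ i, levCount P (W₂.erase y) i = levCount P (W₁.erase x) i := by
    intro i
    rw [← hF₂eq]
    exact hF₂lev i
  have hc₁pos : 0 < W₁.card := Finset.card_pos.mpr ⟨x, hxW⟩
  have hc₂pos : 0 < W₂.card := Finset.card_pos.mpr ⟨y, hyW⟩
  have hcx : (W₁.erase x).card = W₁.card - 1 := Finset.card_erase_of_mem hxW
  have hcy : (W₂.erase y).card = W₂.card - 1 := Finset.card_erase_of_mem hyW
  have hmm : W₁.card = W₂.card := by omega
  have hn2 : 2 ≤ n := by omega
  have hm : W₁.card = n - 1 := by omega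
  -- ambient order characterization
  have hle₁ : ∀ a ∈ W₁, ∀ b ∈ W₁, (a ≤ b ↔ a = b ∨ heightEl P a < heightEl P b) :=
    fun a ha b hb => newt_le_iff hdown₁ hnewt₁ ha hb
  have hle₂ : ∀ a ∈ W₂, ∀ b ∈ W₂, (a ≤ b ↔ a = b ∨ heightEl P a < heightEl P b) :=
    fun a ha b hb => newt_le_iff hdown₂ hnewt₂ ha hb
  have hPle : ∀ a b : ↥P,
      (a ≤ b ↔ a = b ∨ ((a ∈ W₁ ↔ b ∈ W₁) ∧ heightEl P a < heightEl P b)) := by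
    intro a b
    rcases hmemtot a with ha | ha <;> rcases hmemtot b with hb | hb
    · rw [hle₁ a ha b hb]
      constructor
      · rintro (rfl | h)
        · exact Or.inl rfl
        · exact Or.inr ⟨by tauto, h⟩
      · rintro (rfl | ⟨-, h⟩)
        · exact Or.inl rfl
        · exact Or.inr h
    · have h1 : ¬a ≤ b := (hincomp a ha b hb).1
      have h2 : a ≠ b := fun h => hnotboth a ha (h ▸ hb)
      have h3 : ¬(a ∈ W₁ ↔ b ∈ W₁) := fun hiff => hnotboth b (hiff.mp ha) hb
      constructor
      · intro h
        exact absurd h h1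
      · rintro (rfl | ⟨hiff, -⟩)
        · exact absurd rfl h2
        · exact absurd hiff h3
    · have h1 : ¬a ≤ b := (hincomp b hb a ha).2
      have h2 : a ≠ b := fun h => hnotboth b hb (h ▸ ha)
      have h3 : ¬(a ∈ W₁ ↔ b ∈ W₁) := fun hiff => hnotboth a (hiff.mpr hb) ha
      constructor
      · intro h
        exact absurd h h1
      · rintro (rfl | ⟨hiff, -⟩)
        · exact absurd rfl h2
        · exact absurd hiff h3
    · rw [hle₂ a ha b hb]
      constructor
      · rintro (rfl | h)
        · exact Or.inl rfl
        · exact Or.inr ⟨by tauto, h⟩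
      · rintro (rfl | ⟨-, h⟩)
        · exact Or.inl rfl
        · exact Or.inr h
  -- tops and levels
  have htop₁ : ∀ w ∈ W₁, heightEl P w ≤ heightEl P x := by
    intro w hw
    by_contra hgt
    push_neg at hgt
    have hxw : x ≤ w := (hle₁ x hxW w hw).mpr (Or.inr hgt)
    have hwx := hx.2 w hw hxw
    rw [hwx] at hgt
    omega
  have htop₂ : ∀ w ∈ W₂, heightEl P w ≤ heightEl P y := by
    intro w hw
    by_contra hgt
    push_neg at hgt
    have hyw : y ≤ w := (hle₂ y hyW w hw).mpr (Or.inr hgt)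
    have hwy := hy.2 w hw hyw
    rw [hwy] at hgt
    omega
  have hlev : ∀ (W : Finset ↥P), IsDownset P W → ∀ u : ↥P, u ∈ W →
      ∀ i, 1 ≤ i → i ≤ heightEl P u → 0 < levCount P W i := by
    intro W hW u hu i h1 h2
    rcases eq_or_lt_of_le h2 with heq | hlt
    · exact Finset.card_pos.mpr ⟨u, Finset.mem_filter.mpr ⟨hu, heq.symm⟩⟩
    · obtain ⟨z, hz, hzi⟩ := exists_heightEl_eq h1 hlt
      exact Finset.card_pos.mpr ⟨z, Finset.mem_filter.mpr ⟨hW hu hz.le, hzi⟩⟩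
  have hxlevpos : ∀ i, 1 ≤ i → i ≤ heightEl P x → 0 < levCount P W₁ i :=
    hlev W₁ hdown₁ x hxW
  have hylevpos : ∀ i, 1 ≤ i → i ≤ heightEl P y → 0 < levCount P W₂ i :=
    hlev W₂ hdown₂ y hyW
  have hlevz : ∀ i, heightEl P x < i → levCount P W₁ i = 0 := by
    intro i hi
    unfold levCount
    rw [Finset.card_eq_zero, Finset.eq_empty_iff_forall_notMem]
    intro z hz
    rw [Finset.mem_filter] at hz
    have := htop₁ z hz.1
    omega
  -- pointwise relation between the two level profiles
  have hpoint : ∀ i,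
      (if heightEl P x = i then levCount P W₁ i - 1 else levCount P W₁ i) =
      (if heightEl P y = i then levCount P W₂ i - 1 else levCount P W₂ i) := by
    intro i
    rw [← levCount_erase hxW i, ← levCount_erase hyW i]
    exact (hpsiLev i).symm
  -- A = B gives an isomorphism of the two parts, contradiction
  have hisoAB : (∀ i, levCount P W₁ i = levCount P W₂ i) → False := by
    intro hAB
    obtain ⟨f, hinj, him, hkey⟩ := exists_key_map (ι := ℕ) (heightEl P) (heightEl P) W₁ W₂
      (fun c => by exact hAB c)
    apply hniso
    refine subposet_orderIso_of_map f hinj him ?_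
    intro a ha b hb
    have hfa : f a ∈ W₂ := him ▸ Finset.mem_image_of_mem f ha
    have hfb : f b ∈ W₂ := him ▸ Finset.mem_image_of_mem f hb
    rw [hle₁ a ha b hb, hle₂ (f a) hfa (f b) hfb, hkey a ha, hkey b hb]
    constructor
    · rintro (rfl | h)
      · exact Or.inl rfl
      · exact Or.inr h
    · rintro (h | h)
      · exact Or.inl (hinj (Finset.mem_coe.mpr ha) (Finset.mem_coe.mpr hb) h)
      · exact Or.inr h
  have hH : heightEl P x < heightEl P y := by
    rcases eq_or_lt_of_le hxy with hEq | h
    · exfalso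
      apply hisoAB
      intro i
      have hp := hpoint i
      by_cases hc : heightEl P x = i
      · rw [if_pos hc, if_pos (hEq ▸ hc)] at hp
        have h1 : 0 < levCount P W₁ i :=
          hxlevpos i (by have := one_le_heightEl (Q := P) x; omega) (le_of_eq hc.symm)
        have h2 : 0 < levCount P W₂ i :=
          hylevpos i (by have := one_le_heightEl (Q := P) x; omega) (le_of_eq (hEq ▸ hc).symm)
        omega
      · rw [if_neg hc, if_neg (fun h => hc (by rw [hEq]; exact h))] at hp
        exact hp
    · exact h
  have hstep : heightEl P y = heightEl P x + 1 := by
    by_contra hne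
    have hp := hpoint (heightEl P x + 1)
    rw [if_neg (by omega), if_neg (by omega)] at hp
    have h0 : levCount P W₁ (heightEl P x + 1) = 0 := hlevz _ (by omega)
    have hpos : 0 < levCount P W₂ (heightEl P x + 1) := hylevpos _ (by omega) (by omega)
    omega
  have hBtop : levCount P W₂ (heightEl P y) = 1 := by
    have hp := hpoint (heightEl P y)
    rw [if_neg (by omega), if_pos rfl] at hp
    have h0 : levCount P W₁ (heightEl P y) = 0 := hlevz _ (by omega)
    have hpos : 0 < levCount P W₂ (heightEl P y) :=
      hylevpos _ (by have := one_le_heightEl (Q := P) y; omega) le_rfl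
    omega
  have hAtopy : levCount P W₁ (heightEl P y) = 0 := hlevz _ (by omega)
  have hABeq : ∀ i, i ≠ heightEl P x → i ≠ heightEl P y →
      levCount P W₁ i = levCount P W₂ i := by
    intro i h1 h2
    have hp := hpoint i
    rw [if_neg (by omega), if_neg (by omega)] at hp
    exact hp
  -- the lower part has height at least 2
  have hH₁2 : 2 ≤ heightEl P x := by
    by_contra hlt
    have hx1 : heightEl P x = 1 := by have := one_le_heightEl (Q := P) x; omega
    have hall : ∀ w ∈ W₁, heightEl P w = 1 := fun w hw => by
      have h1 := htop₁ w hw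
      have h2 := one_le_heightEl (Q := P) w
      omega
    have hm2 : 2 ≤ W₁.card := by
      have hb1 : 0 < levCount P W₂ 1 := hylevpos 1 le_rfl (by omega)
      obtain ⟨b, hb⟩ := Finset.card_pos.mp hb1
      rw [Finset.mem_filter] at hb
      have hby : b ≠ y := by
        intro h
        rw [h] at hb
        omega
      have h2 : 1 < W₂.card := Finset.one_lt_card.mpr ⟨b, hb.1, y, hyW, hby⟩
      omega
    obtain ⟨u, hu, v, hv, huv⟩ := Finset.one_lt_card.mp hm2
    obtain ⟨-, hpath⟩ := hconn₁
    have hpathuv := hpath ⟨u, hu⟩ ⟨v, hv⟩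
    have hsingle : ∀ a b : ↥(subposet P W₁),
        Relation.ReflTransGen (fun s t : ↥(subposet P W₁) => s ≤ t ∨ t ≤ s) a b → a = b := by
      intro a b h
      induction h with
      | refl => rfl
      | tail hab hcd ih =>
        rename_i mid last
        have hcomp : mid.1 ≤ last.1 ∨ last.1 ≤ mid.1 := hcd
        have heqml : mid.1 = last.1 := by
          rcases hcomp with h' | h'
          · rcases (hle₁ mid.1 mid.2 last.1 last.2).mp h' with h'' | h''
            · exact h''
            · rw [hall mid.1 mid.2, hall last.1 last.2] at h''
              omega
          · rcases (hle₁ last.1 last.2 mid.1 mid.2).mp h' with h'' | h''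
            · exact h''.symm
            · rw [hall mid.1 mid.2, hall last.1 last.2] at h''
              omega
        exact ih.trans (Subtype.ext heqml)
    have := hsingle _ _ hpathuv
    exact huv (congrArg Subtype.val this)
  have hm3 : 3 ≤ W₂.card := by
    have h1 : 0 < levCount P W₂ 1 := hylevpos 1 le_rfl (by omega)
    have h2 : 0 < levCount P W₂ 2 := hylevpos 2 (by omega) (by omega)
    have h3 : 0 < levCount P W₂ 3 := hylevpos 3 (by omega) (by omega)
    obtain ⟨b₁, hb₁⟩ := Finset.card_pos.mp h1
    obtain ⟨b₂, hb₂⟩ := Finset.card_pos.mp h2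
    obtain ⟨b₃, hb₃⟩ := Finset.card_pos.mp h3
    rw [Finset.mem_filter] at hb₁ hb₂ hb₃
    have hne12 : b₁ ≠ b₂ := fun h => by rw [h] at hb₁; omega
    have hne13 : b₁ ≠ b₃ := fun h => by rw [h] at hb₁; omega
    have hne23 : b₂ ≠ b₃ := fun h => by rw [h] at hb₂; omega
    have hsub : ({b₁, b₂, b₃} : Finset ↥P) ⊆ W₂ := by
      intro z hz
      rcases Finset.mem_insert.mp hz with rfl | hz
      · exact hb₁.1
      rcases Finset.mem_insert.mp hz with rfl | hz
      · exact hb₂.1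
      rw [Finset.mem_singleton] at hz
      rw [hz]
      exact hb₃.1
    have hc3 : ({b₁, b₂, b₃} : Finset ↥P).card = 3 := by
      rw [Finset.card_insert_of_notMem (by simp [hne12, hne13]),
        Finset.card_insert_of_notMem (by simp [hne23]), Finset.card_singleton]
    have := Finset.card_le_card hsub
    omega
  have hn4 : 4 ≤ n := by omega
  -- the common first level
  have hc1eq : levCount P W₁ 1 = levCount P W₂ 1 := hABeq 1 (by omega) (by omega)
  have hminlev : (Finset.univ.filter fun z : ↥P => ∀ w, w ≤ z → w = z).card =
      levCount P W₁ 1 + levCount P W₂ 1 := by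
    have hsplit : (Finset.univ.filter fun z : ↥P => ∀ w, w ≤ z → w = z) =
        (W₁.filter fun z => heightEl P z = 1) ∪ (W₂.filter fun z => heightEl P z = 1) := by
      ext z
      simp only [Finset.mem_filter, Finset.mem_union, Finset.mem_univ, true_and]
      constructor
      · intro hmin
        have h1 : heightEl P z = 1 := heightEl_eq_one_iff.mpr hmin
        rcases hmemtot z with h | h
        · exact Or.inl ⟨h, h1⟩
        · exact Or.inr ⟨h, h1⟩
      · rintro (⟨-, h1⟩ | ⟨-, h1⟩) <;> exact heightEl_eq_one_iff.mp h1
    rw [hsplit, Finset.card_union_of_disjoint (Finset.disjoint_filter_filter hdisj)]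
    rfl
  have h2c1 : 2 * levCount P W₁ 1 ≤ n - 1 := by omega
  have hc1pos : 0 < levCount P W₁ 1 := hxlevpos 1 le_rfl (one_le_heightEl x)
  -- canonical downsets of each size
  have hexD : ∀ (W : Finset ↥P), IsDownset P W → ∀ s : ℕ,
      ∃ E : Finset ↥P, s ≤ W.card → (E ⊆ W ∧ IsDownset P E ∧ E.card = s) := by
    intro W hW s
    by_cases hs : s ≤ W.card
    · obtain ⟨E, h1, h2, h3⟩ := exists_downset_card hW hs
      exact ⟨E, fun _ => ⟨h1, h2, h3⟩⟩
    · exact ⟨∅, fun h => absurd h hs⟩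
  choose D₁ hD₁ using hexD W₁ hdown₁
  choose D₂ hD₂ using hexD W₂ hdown₂
  have hdet : ∀ (W : Finset ↥P), IsDownset P W → Newtonian (subposet P W) →
      ∀ E E' : Finset ↥P, E ⊆ W → E' ⊆ W → IsDownset P E → IsDownset P E' →
      E.card = E'.card → ∀ i, levCount P E i = levCount P E' i :=
    fun W hW hN E E' h1 h2 h3 h4 h5 => levCount_eq_of_card_eq hW hN h3 h4 h1 h2 h5
  have hcross : ∀ s, s ≤ n - 2 → ∀ i, levCount P (D₁ s) i = levCount P (D₂ s) i := by
    intro s hs i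
    obtain ⟨h1s, h2s, h3s⟩ := hD₁ s (by omega)
    obtain ⟨h1t, h2t, h3t⟩ := hD₂ s (by omega)
    have hsm' : s ≤ (W₁.erase x).card := by omega
    obtain ⟨E, hEsub, hEdown, hEcard⟩ := exists_downset_card hde₁ hsm'
    obtain ⟨E', hE'sub, hE'down, hE'card, hE'lev⟩ := transport hde₁ hde₂ ψ hEsub hEdown
    have ha : levCount P (D₁ s) i = levCount P E i :=
      hdet W₁ hdown₁ hnewt₁ _ _ h1s (hEsub.trans (Finset.erase_subset _ _)) h2s hEdown
        (by omega) i
    have hb : levCount P (D₂ s) i = levCount P E' i :=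
      hdet W₂ hdown₂ hnewt₂ _ _ h1t (hE'sub.trans (Finset.erase_subset _ _)) h2t hE'down
        (by omega) i
    rw [ha, hb, hE'lev i]
  -- splitting of unions
  have hsplitIn : ∀ E₁ E₂ : Finset ↥P, E₁ ⊆ W₁ → E₂ ⊆ W₂ →
      ((E₁ ∪ E₂) ∩ W₁ = E₁ ∧ (E₁ ∪ E₂) ∩ W₂ = E₂) := by
    intro E₁ E₂ h1 h2
    constructor
    · ext z
      simp only [Finset.mem_inter, Finset.mem_union]
      constructor
      · rintro ⟨hz | hz, hzW⟩
        · exact hz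
        · exact absurd (h2 hz) (fun h => hnotboth z hzW h)
      · intro hz
        exact ⟨Or.inl hz, h1 hz⟩
    · ext z
      simp only [Finset.mem_inter, Finset.mem_union]
      constructor
      · rintro ⟨hz | hz, hzW⟩
        · exact absurd hzW (fun h => hnotboth z (h1 hz) h)
        · exact hz
      · intro hz
        exact ⟨Or.inr hz, h2 hz⟩
  have hDfor : ∀ s, 1 ≤ s → s ≤ n - 1 →
      (IsDownset P (D₁ s ∪ D₂ (n - s)) ∧ (D₁ s ∪ D₂ (n - s)).card = n ∧
        (D₁ s ∪ D₂ (n - s)) ∩ W₁ = D₁ s ∧ (D₁ s ∪ D₂ (n - s)) ∩ W₂ = D₂ (n - s)) := by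
    intro s h1 h2
    obtain ⟨ha1, ha2, ha3⟩ := hD₁ s (by omega)
    obtain ⟨hb1, hb2, hb3⟩ := hD₂ (n - s) (by omega)
    have hdisj' : Disjoint (D₁ s) (D₂ (n - s)) := hdisj.mono ha1 hb1
    refine ⟨?_, ?_, (hsplitIn _ _ ha1 hb1).1, (hsplitIn _ _ ha1 hb1).2⟩
    · intro a b ha hb
      rcases Finset.mem_union.mp ha with h | h
      · exact Finset.mem_union_left _ (ha2 h hb)
      · exact Finset.mem_union_right _ (hb2 h hb)
    · rw [Finset.card_union_of_disjoint hdisj', ha3, hb3]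
      omega
  have hinterdown : ∀ D W : Finset ↥P, IsDownset P D → IsDownset P W →
      IsDownset P (D ∩ W) := by
    intro D W hD hW a b ha hb
    rw [Finset.mem_inter] at ha ⊢
    exact ⟨hD ha.1 hb, hW ha.2 hb⟩
  have hDdecomp : ∀ D : Finset ↥P, (D ∩ W₁) ∪ (D ∩ W₂) = D := by
    intro D
    ext z
    simp only [Finset.mem_union, Finset.mem_inter]
    constructor
    · rintro (⟨h, -⟩ | ⟨h, -⟩) <;> exact h
    · intro hz
      rcases hmemtot z with h | h
      · exact Or.inl ⟨hz, h⟩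
      · exact Or.inr ⟨hz, h⟩
  -- the master isomorphism-class lemma
  have hclsCore : ∀ (D D' : Finset ↥P) (g : ↥P → Bool), IsDownset P D → IsDownset P D' →
      (∀ z w : ↥P, (g z = g w) ↔ ((z ∈ W₁) ↔ (w ∈ W₁))) →
      (∀ i, levCount P (D ∩ W₁) i =
        (D'.filter fun z => g z = true ∧ heightEl P z = i).card) →
      (∀ i, levCount P (D ∩ W₂) i =
        (D'.filter fun z => g z = false ∧ heightEl P z = i).card) →
      cls (subposet P D) = cls (subposet P D') := by
    intro D D' g hD hD' hgiff hl1 hl2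
    have hcells : ∀ c : Bool × ℕ,
        (D.filter fun z => ((decide (z ∈ W₁), heightEl P z) : Bool × ℕ) = c).card =
        (D'.filter fun z => ((g z, heightEl P z) : Bool × ℕ) = c).card := by
      rintro ⟨b, i⟩
      cases b
      · have e1 : (D.filter fun z => ((decide (z ∈ W₁), heightEl P z) : Bool × ℕ) = (false, i))
            = (D ∩ W₂).filter (fun z => heightEl P z = i) := by
          ext z
          simp only [Finset.mem_filter, Finset.mem_inter, Prod.mk.injEq,
            decide_eq_false_iff_not]
          constructor
          · rintro ⟨hz, hnz, hi⟩
            rcases hmemtot z with h | h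
            · exact absurd h hnz
            · exact ⟨⟨hz, h⟩, hi⟩
          · rintro ⟨⟨hz, h2⟩, hi⟩
            exact ⟨hz, ⟨fun h => hnotboth z h h2, hi⟩⟩
        have e2 : (D'.filter fun z => ((g z, heightEl P z) : Bool × ℕ) = (false, i))
            = (D'.filter fun z => g z = false ∧ heightEl P z = i) := by
          ext z
          simp only [Finset.mem_filter, Prod.mk.injEq]
        rw [e1, e2]
        exact hl2 i
      · have e1 : (D.filter fun z => ((decide (z ∈ W₁), heightEl P z) : Bool × ℕ) = (true, i))
            = (D ∩ W₁).filter (fun z => heightEl P z = i) := by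
          ext z
          simp only [Finset.mem_filter, Finset.mem_inter, Prod.mk.injEq, decide_eq_true_eq]
          tauto
        have e2 : (D'.filter fun z => ((g z, heightEl P z) : Bool × ℕ) = (true, i))
            = (D'.filter fun z => g z = true ∧ heightEl P z = i) := by
          ext z
          simp only [Finset.mem_filter, Prod.mk.injEq]
        rw [e1, e2]
        exact hl1 i
    obtain ⟨f, hinj, him, hkey⟩ := exists_key_map
      (fun z : ↥P => ((decide (z ∈ W₁), heightEl P z) : Bool × ℕ))
      (fun z : ↥P => ((g z, heightEl P z) : Bool × ℕ)) D D' hcells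
    have hord : ∀ a ∈ D, ∀ b ∈ D, (a ≤ b ↔ f a ≤ f b) := by
      intro a ha b hb
      have hfa : f a ∈ D' := him ▸ Finset.mem_image_of_mem f ha
      have hfb : f b ∈ D' := him ▸ Finset.mem_image_of_mem f hb
      have hka := hkey a ha
      have hkb := hkey b hb
      have hga : g (f a) = decide (a ∈ W₁) := congrArg Prod.fst hka
      have hgb : g (f b) = decide (b ∈ W₁) := congrArg Prod.fst hkb
      have hha : heightEl P (f a) = heightEl P a := congrArg Prod.snd hka
      have hhb : heightEl P (f b) = heightEl P b := congrArg Prod.snd hkb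
      rw [hPle a b, hPle (f a) (f b)]
      constructor
      · rintro (rfl | ⟨hiff, hlt⟩)
        · exact Or.inl rfl
        · refine Or.inr ⟨?_, by omega⟩
          apply (hgiff (f a) (f b)).mp
          rw [hga, hgb]
          exact decide_eq_decide.mpr hiff
      · rintro (heq | ⟨hiff, hlt⟩)
        · exact Or.inl (hinj (Finset.mem_coe.mpr ha) (Finset.mem_coe.mpr hb) heq)
        · refine Or.inr ⟨?_, by omega⟩
          have h1 : g (f a) = g (f b) := (hgiff (f a) (f b)).mpr hiff
          rw [hga, hgb] at h1
          exact decide_eq_decide.mp h1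
    obtain ⟨e⟩ := subposet_orderIso_of_map f hinj him hord
    exact Quotient.sound ⟨e⟩
  -- all-height-one criterion
  have hallh1 : ∀ (W : Finset ↥P), IsDownset P W → Newtonian (subposet P W) →
      ∀ E : Finset ↥P, E ⊆ W → IsDownset P E →
      ((∀ w ∈ E, heightEl P w = 1) ↔ E.card ≤ levCount P W 1) := by
    intro W hW hN E hEW hEd
    constructor
    · intro hall
      have hsub : E ⊆ W.filter (fun z => heightEl P z = 1) := fun z hz =>
        Finset.mem_filter.mpr ⟨hEW hz, hall z hz⟩
      exact Finset.card_le_card hsub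
    · intro hcard w hw
      obtain ⟨E', hE'sub, hE'card⟩ :=
        Finset.exists_subset_card_eq (s := W.filter fun z => heightEl P z = 1) hcard
      have hE'W : E' ⊆ W := hE'sub.trans (Finset.filter_subset _ _)
      have hE'down : IsDownset P E' := by
        intro a b ha hb
        have h1 : heightEl P a = 1 := (Finset.mem_filter.mp (hE'sub ha)).2
        have h2 := heightEl_eq_one_iff.mp h1 b hb
        rw [h2]
        exact ha
      have hlev' := hdet W hW hN E E' hEW hE'W hEd hE'down hE'card.symm
      by_contra hne
      have hpos : 0 < levCount P E (heightEl P w) :=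
        Finset.card_pos.mpr ⟨w, Finset.mem_filter.mpr ⟨hw, rfl⟩⟩
      have hz : levCount P E' (heightEl P w) = 0 := by
        unfold levCount
        rw [Finset.card_eq_zero, Finset.eq_empty_iff_forall_notMem]
        intro z hz
        rw [Finset.mem_filter] at hz
        have := (Finset.mem_filter.mp (hE'sub hz.1)).2
        omega
      rw [hlev' (heightEl P w)] at hpos
      omega
  -- component class sizes
  have hincomp' : ∀ a ∈ W₂, ∀ b ∈ W₁, ¬a ≤ b ∧ ¬b ≤ a :=
    fun a ha b hb => ⟨(hincomp b hb a ha).2, (hincomp b hb a ha).1⟩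
  have hclassSize : ∀ (V V' : Finset ↥P),
      (∀ a ∈ V, ∀ b ∈ V', ¬a ≤ b ∧ ¬b ≤ a) →
      (∀ a ∈ V, ∀ b ∈ V, (a ≤ b ↔ a = b ∨ heightEl P a < heightEl P b)) →
      ∀ E E' : Finset ↥P, E ⊆ V → E' ⊆ V' → IsDownset P E →
      ∀ u ∈ E, ((E ∪ E').filter (Relation.ReflTransGen (relIn P (E ∪ E')) u)).card =
        (if ∀ w ∈ E, heightEl P w = 1 then 1 else E.card) := by
    intro V V' hinc hle E E' hEV hE'V' hEd u hu
    have hstay : ∀ a b : ↥P,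
        Relation.ReflTransGen (relIn P (E ∪ E')) a b → a ∈ E → b ∈ E := by
      intro a b h
      induction h with
      | refl => exact id
      | tail hab hcd ih =>
        rename_i mid last
        intro haE
        have hmidE := ih haE
        obtain ⟨hmU, hlU, hcomp⟩ := hcd
        rcases Finset.mem_union.mp hlU with h | h
        · exact h
        · exfalso
          have := hinc mid (hEV hmidE) last (hE'V' h)
          tauto
    by_cases hall : ∀ w ∈ E, heightEl P w = 1
    · rw [if_pos hall]
      have hfix : ∀ b : ↥P, Relation.ReflTransGen (relIn P (E ∪ E')) u b → b = u := by
        intro b h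
        induction h with
        | refl => rfl
        | tail hab hcd ih =>
          rename_i mid last
          obtain ⟨hmU, hlU, hcomp⟩ := hcd
          have hmidu : mid = u := ih
          rw [hmidu] at hcomp
          have hlastE : last ∈ E :=
            hstay u last (Relation.ReflTransGen.tail hab (by rw [hmidu] at hmU ⊢; exact ⟨hmU, hlU, hcomp⟩)) hu
          have h1 : heightEl P u = 1 := hall u hu
          have h2 : heightEl P last = 1 := hall last hlastE
          rcases hcomp with h' | h'
          · rcases (hle u (hEV hu) last (hEV hlastE)).mp h' with h'' | h''
            · exact h''.symm
            · omega
          · rcases (hle last (hEV hlastE) u (hEV hu)).mp h' with h'' | h''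
            · exact h''
            · omega
      have hfil : (E ∪ E').filter (Relation.ReflTransGen (relIn P (E ∪ E')) u) = {u} := by
        ext v
        simp only [Finset.mem_filter, Finset.mem_singleton]
        constructor
        · rintro ⟨-, h⟩
          exact hfix v h
        · rintro rfl
          exact ⟨Finset.mem_union_left _ hu, Relation.ReflTransGen.refl⟩
      rw [hfil, Finset.card_singleton]
    · rw [if_neg hall]
      push_neg at hall
      obtain ⟨w, hwE, hw1⟩ := hall
      have hw2 : 2 ≤ heightEl P w := by have := one_le_heightEl (Q := P) w; omega
      obtain ⟨z, hzw, hz1⟩ := exists_heightEl_eq (y := w) (i := 1) le_rfl (by omega)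
      have hzE : z ∈ E := hEd hwE hzw.le
      have hsym : ∀ a b : ↥P, relIn P (E ∪ E') a b → relIn P (E ∪ E') b a := by
        rintro a b ⟨h1, h2, h3⟩
        exact ⟨h2, h1, h3.symm⟩
      have hconnz : ∀ v ∈ E, Relation.ReflTransGen (relIn P (E ∪ E')) v z := by
        intro v hv
        by_cases hv1 : heightEl P v = 1
        · have hvw : v ≤ w := (hle v (hEV hv) w (hEV hwE)).mpr (Or.inr (by omega))
          refine Relation.ReflTransGen.tail (b := w) (Relation.ReflTransGen.single ?_) ?_
          · exact ⟨Finset.mem_union_left _ hv, Finset.mem_union_left _ hwE, Or.inl hvw⟩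
          · exact ⟨Finset.mem_union_left _ hwE, Finset.mem_union_left _ hzE,
              Or.inr hzw.le⟩
        · have hzv : z ≤ v := (hle z (hEV hzE) v (hEV hv)).mpr
            (Or.inr (by have := one_le_heightEl (Q := P) v; omega))
          exact Relation.ReflTransGen.single
            ⟨Finset.mem_union_left _ hv, Finset.mem_union_left _ hzE, Or.inr hzv⟩
      have hfil : (E ∪ E').filter (Relation.ReflTransGen (relIn P (E ∪ E')) u) = E := by
        ext v
        simp only [Finset.mem_filter]
        constructor
        · rintro ⟨-, h⟩
          exact hstay u v h hu
        · intro hv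
          exact ⟨Finset.mem_union_left _ hv,
            (hconnz u hu).trans (rtg_symm hsym (hconnz v hv))⟩
      rw [hfil]
  -- ncount values of the canonical downsets
  have hncount : ∀ s, 1 ≤ s → s ≤ n - 1 → ∀ v : ℕ,
      ncount (subposet P (D₁ s ∪ D₂ (n - s))) v =
        (if (if s ≤ levCount P W₁ 1 then 1 else s) = v then s else 0) +
        (if (if n - s ≤ levCount P W₁ 1 then 1 else n - s) = v then n - s else 0) := by
    intro s h1 h2 v
    obtain ⟨ha1, ha2, ha3⟩ := hD₁ s (by omega)
    obtain ⟨hb1, hb2, hb3⟩ := hD₂ (n - s) (by omega)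
    have hdisj' : Disjoint (D₁ s) (D₂ (n - s)) := hdisj.mono ha1 hb1
    rw [ncount_subposet, Finset.filter_union,
      Finset.card_union_of_disjoint (Finset.disjoint_filter_filter hdisj')]
    have hσ₁ := hclassSize W₁ W₂ hincomp hle₁ (D₁ s) (D₂ (n - s)) ha1 hb1 ha2
    congr 1
    · have hiffa := hallh1 W₁ hdown₁ hnewt₁ (D₁ s) ha1 ha2
      by_cases hcase : s ≤ levCount P W₁ 1
      · have hall : ∀ w ∈ D₁ s, heightEl P w = 1 := hiffa.mpr (by omega)
        by_cases hv : (1 : ℕ) = v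
        · rw [if_pos (by rw [if_pos hcase]; exact hv), Finset.filter_true_of_mem, ha3]
          intro u hu
          rw [hσ₁ u hu, if_pos hall]
          exact hv
        · rw [if_neg (by rw [if_pos hcase]; exact hv), Finset.filter_false_of_mem,
            Finset.card_empty]
          intro u hu hpred
          rw [hσ₁ u hu, if_pos hall] at hpred
          exact hv hpred
      · have hnall : ¬(∀ w ∈ D₁ s, heightEl P w = 1) :=
          fun h => hcase (by have := hiffa.mp h; omega)
        by_cases hv : s = v
        · rw [if_pos (by rw [if_neg hcase]; exact hv), Finset.filter_true_of_mem, ha3]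
          intro u hu
          rw [hσ₁ u hu, if_neg hnall, ha3]
          exact hv
        · rw [if_neg (by rw [if_neg hcase]; exact hv), Finset.filter_false_of_mem,
            Finset.card_empty]
          intro u hu hpred
          rw [hσ₁ u hu, if_neg hnall, ha3] at hpred
          exact hv hpred
    · have huc : D₁ s ∪ D₂ (n - s) = D₂ (n - s) ∪ D₁ s := Finset.union_comm _ _
      rw [huc]
      have hσ₂ := hclassSize W₂ W₁ hincomp' hle₂ (D₂ (n - s)) (D₁ s) hb1 ha1 hb2
      have hiffb := hallh1 W₂ hdown₂ hnewt₂ (D₂ (n - s)) hb1 hb2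
      by_cases hcase : n - s ≤ levCount P W₁ 1
      · have hall : ∀ w ∈ D₂ (n - s), heightEl P w = 1 := hiffb.mpr (by omega)
        by_cases hv : (1 : ℕ) = v
        · rw [if_pos (by rw [if_pos hcase]; exact hv), Finset.filter_true_of_mem, hb3]
          intro u hu
          rw [hσ₂ u hu, if_pos hall]
          exact hv
        · rw [if_neg (by rw [if_pos hcase]; exact hv), Finset.filter_false_of_mem,
            Finset.card_empty]
          intro u hu hpred
          rw [hσ₂ u hu, if_pos hall] at hpred
          exact hv hpred
      · have hnall : ¬(∀ w ∈ D₂ (n - s), heightEl P w = 1) :=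
          fun h => hcase (by have := hiffb.mp h; omega)
        by_cases hv : n - s = v
        · rw [if_pos (by rw [if_neg hcase]; exact hv), Finset.filter_true_of_mem, hb3]
          intro u hu
          rw [hσ₂ u hu, if_neg hnall, hb3]
          exact hv
        · rw [if_neg (by rw [if_neg hcase]; exact hv), Finset.filter_false_of_mem,
            Finset.card_empty]
          intro u hu hpred
          rw [hσ₂ u hu, if_neg hnall, hb3] at hpred
          exact hv hpred
  -- profile value at the top level
  have hprof : ∀ s, 1 ≤ s → s ≤ n - 1 →
      profInv (subposet P (D₁ s ∪ D₂ (n - s))) (heightEl P y) =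
        (if s = 1 then 1 else 0) := by
    intro s h1 h2
    obtain ⟨ha1, ha2, ha3⟩ := hD₁ s (by omega)
    obtain ⟨hb1, hb2, hb3⟩ := hD₂ (n - s) (by omega)
    have hdisj' : Disjoint (D₁ s) (D₂ (n - s)) := hdisj.mono ha1 hb1
    obtain ⟨hdw, -, -, -⟩ := hDfor s h1 h2
    rw [profInv_subposet hdw, levCount_union hdisj']
    have hz1 : levCount P (D₁ s) (heightEl P y) = 0 := by
      have hle' : levCount P (D₁ s) (heightEl P y) ≤ levCount P W₁ (heightEl P y) :=
        Finset.card_le_card (Finset.filter_subset_filter _ ha1)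
      omega
    by_cases hs1 : s = 1
    · rw [if_pos hs1]
      have hW2 : D₂ (n - s) = W₂ :=
        Finset.eq_of_subset_of_card_le hb1 (by rw [hb3]; omega)
      rw [hW2]
      omega
    · rw [if_neg hs1]
      have hcr := (hcross (n - s) (by omega) (heightEl P y)).symm
      have hle' : levCount P (D₁ (n - s)) (heightEl P y) ≤ levCount P W₁ (heightEl P y) :=
        Finset.card_le_card (Finset.filter_subset_filter _ (hD₁ (n - s) (by omega)).1)
      omega
  -- conversion facts for the master lemma
  have hfT : ∀ (D' : Finset ↥P) (i : ℕ),
      (D'.filter fun z => decide (z ∈ W₁) = true ∧ heightEl P z = i) =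
      (D' ∩ W₁).filter fun z => heightEl P z = i := by
    intro D' i
    ext z
    simp only [Finset.mem_filter, Finset.mem_inter, decide_eq_true_eq]
    tauto
  have hfF : ∀ (D' : Finset ↥P) (i : ℕ),
      (D'.filter fun z => decide (z ∈ W₁) = false ∧ heightEl P z = i) =
      (D' ∩ W₂).filter fun z => heightEl P z = i := by
    intro D' i
    ext z
    simp only [Finset.mem_filter, Finset.mem_inter, decide_eq_false_iff_not]
    constructor
    · rintro ⟨hz, hnz, hi⟩
      rcases hmemtot z with h | h
      · exact absurd h hnz
      · exact ⟨⟨hz, h⟩, hi⟩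
    · rintro ⟨⟨hz, h2⟩, hi⟩
      exact ⟨hz, fun h => hnotboth z h h2, hi⟩
  have hgT : ∀ (D' : Finset ↥P) (i : ℕ),
      (D'.filter fun z => decide (z ∈ W₂) = true ∧ heightEl P z = i) =
      (D' ∩ W₂).filter fun z => heightEl P z = i := by
    intro D' i
    ext z
    simp only [Finset.mem_filter, Finset.mem_inter, decide_eq_true_eq]
    tauto
  have hgF : ∀ (D' : Finset ↥P) (i : ℕ),
      (D'.filter fun z => decide (z ∈ W₂) = false ∧ heightEl P z = i) =
      (D' ∩ W₁).filter fun z => heightEl P z = i := by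
    intro D' i
    ext z
    simp only [Finset.mem_filter, Finset.mem_inter, decide_eq_false_iff_not]
    constructor
    · rintro ⟨hz, hnz, hi⟩
      rcases hmemtot z with h | h
      · exact ⟨⟨hz, h⟩, hi⟩
      · exact absurd h hnz
    · rintro ⟨⟨hz, h2⟩, hi⟩
      exact ⟨hz, fun h => hnotboth z h2 h, hi⟩
  have hiff12 : ∀ z : ↥P, z ∈ W₁ ↔ ¬(z ∈ W₂) := fun z =>
    ⟨fun h h2 => hnotboth z h h2, fun h => (hmemtot z).resolve_right h⟩
  have hgiff₂ : ∀ z w : ↥P, (decide (z ∈ W₂) = decide (w ∈ W₂)) ↔ ((z ∈ W₁) ↔ (w ∈ W₁)) := by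
    intro z w
    rw [decide_eq_decide, hiff12 z, hiff12 w]
    tauto
  -- classification of arbitrary size-n downsets
  have hchiWell : ∀ D : Finset ↥P, IsDownset P D → D.card = n →
      (1 ≤ (D ∩ W₁).card ∧ (D ∩ W₁).card ≤ n - 1 ∧
        cls (subposet P D) =
          cls (subposet P (D₁ ((D ∩ W₁).card) ∪ D₂ (n - (D ∩ W₁).card)))) := by
    intro D hDdown hDcard
    have hdisjD : Disjoint (D ∩ W₁) (D ∩ W₂) :=
      hdisj.mono Finset.inter_subset_right Finset.inter_subset_right
    have hcd : (D ∩ W₁).card + (D ∩ W₂).card = n := by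
      rw [← Finset.card_union_of_disjoint hdisjD, hDdecomp D, hDcard]
    have hs1 : (D ∩ W₁).card ≤ n - 1 := by
      have := Finset.card_le_card (Finset.inter_subset_right : D ∩ W₁ ⊆ W₁)
      omega
    have hs2 : (D ∩ W₂).card ≤ n - 1 := by
      have := Finset.card_le_card (Finset.inter_subset_right : D ∩ W₂ ⊆ W₂)
      omega
    have hs0 : 1 ≤ (D ∩ W₁).card := by omega
    obtain ⟨hdw, hcn, hi1, hi2⟩ := hDfor ((D ∩ W₁).card) hs0 hs1
    obtain ⟨ha1, ha2, ha3⟩ := hD₁ ((D ∩ W₁).card) (by omega)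
    obtain ⟨hb1, hb2, hb3⟩ := hD₂ (n - (D ∩ W₁).card) (by omega)
    refine ⟨hs0, hs1, ?_⟩
    refine hclsCore D _ (fun z => decide (z ∈ W₁)) hDdown hdw
      (fun z w => decide_eq_decide) ?_ ?_
    · intro i
      rw [hfT _ i, hi1]
      exact hdet W₁ hdown₁ hnewt₁ _ _ Finset.inter_subset_right ha1
        (hinterdown D W₁ hDdown hdown₁) ha2 (by omega) i
    · intro i
      rw [hfF _ i, hi2]
      exact hdet W₂ hdown₂ hnewt₂ _ _ Finset.inter_subset_right hb1
        (hinterdown D W₂ hDdown hdown₂) hb2 (by omega) i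
  -- the swap identification
  have hswap : ∀ s, 2 ≤ s → s ≤ n - 2 →
      cls (subposet P (D₁ s ∪ D₂ (n - s))) =
      cls (subposet P (D₁ (n - s) ∪ D₂ (n - (n - s)))) := by
    intro s hsa hsb
    have hnns : n - (n - s) = s := by omega
    obtain ⟨hdw, hcn, hi1, hi2⟩ := hDfor s (by omega) (by omega)
    obtain ⟨hdw', hcn', hi1', hi2'⟩ := hDfor (n - s) (by omega) (by omega)
    rw [hnns] at hdw' hi1' hi2' ⊢
    refine hclsCore _ _ (fun z => decide (z ∈ W₂)) hdw hdw' hgiff₂ ?_ ?_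
    · intro i
      rw [hgT _ i, hi2', hi1]
      exact hcross s (by omega) i
    · intro i
      rw [hgF _ i, hi1', hi2]
      exact (hcross (n - s) (by omega) i).symm
  -- description of DSet
  have hDSetEq : DSet n P =
      ↑((insert 1 (insert (n - 1) (Finset.Icc 2 (n / 2)))).image
        (fun s => cls (subposet P (D₁ s ∪ D₂ (n - s))))) := by
    apply Set.ext
    intro c
    simp only [DSet, Set.mem_setOf_eq, Finset.coe_image, Set.mem_image, Finset.mem_coe,
      Finset.mem_insert, Finset.mem_Icc]
    constructor
    · rintro ⟨D, hDd, hDc, rfl⟩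
      obtain ⟨hb1, hb2, hb3⟩ := hchiWell D hDd hDc
      by_cases hcase : (D ∩ W₁).card = 1 ∨ (D ∩ W₁).card = n - 1 ∨
          (2 ≤ (D ∩ W₁).card ∧ (D ∩ W₁).card ≤ n / 2)
      · exact ⟨(D ∩ W₁).card, hcase, hb3.symm⟩
      · push_neg at hcase
        have hs2 : 2 ≤ (D ∩ W₁).card ∧ (D ∩ W₁).card ≤ n - 2 := by omega
        refine ⟨n - (D ∩ W₁).card, by omega, ?_⟩
        exact ((hswap ((D ∩ W₁).card) hs2.1 hs2.2).symm.trans hb3.symm)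
    · rintro ⟨s, hsmem, rfl⟩
      have hsb : 1 ≤ s ∧ s ≤ n - 1 := by omega
      obtain ⟨hdw, hcn, -, -⟩ := hDfor s hsb.1 hsb.2
      exact ⟨_, hdw, hcn, rfl⟩
  -- distinctness
  have hkey2 : ∀ s s', (s = 1 ∨ s = n - 1 ∨ (2 ≤ s ∧ s ≤ n / 2)) →
      (s' = 1 ∨ s' = n - 1 ∨ (2 ≤ s' ∧ s' ≤ n / 2)) → s < s' →
      cls (subposet P (D₁ s ∪ D₂ (n - s))) = cls (subposet P (D₁ s' ∪ D₂ (n - s'))) →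
      False := by
    intro s s' hsT hs'T hss heq
    have hsb : 1 ≤ s ∧ s ≤ n - 1 := by omega
    have hs'b : 1 ≤ s' ∧ s' ≤ n - 1 := by omega
    have hiso := Quotient.exact heq
    obtain ⟨e⟩ := hiso
    by_cases hs1 : s = 1
    · subst hs1
      have h1 := hprof 1 le_rfl (by omega)
      have h2 := hprof s' hs'b.1 hs'b.2
      rw [profInv_orderIso e (heightEl P y)] at h1
      rw [if_pos rfl] at h1
      rw [if_neg (by omega)] at h2
      omega
    · have hs2 : 2 ≤ s ∧ s ≤ n / 2 := by omega
      have h1 := hncount s hsb.1 hsb.2 (n - s)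
      have h2 := hncount s' hs'b.1 hs'b.2 (n - s)
      rw [ncount_orderIso e (n - s)] at h1
      rw [h1] at h2
      split_ifs at h2 <;> omega
  have hinjOn : Set.InjOn (fun s => cls (subposet P (D₁ s ∪ D₂ (n - s))))
      ↑(insert 1 (insert (n - 1) (Finset.Icc 2 (n / 2)))) := by
    intro s hs s' hs' heq
    simp only [Finset.coe_insert, Set.mem_insert_iff, Finset.mem_coe, Finset.mem_Icc] at hs hs'
    by_contra hne
    rcases Nat.lt_or_ge s s' with h | h
    · exact hkey2 s s' hs hs' h heq
    · exact hkey2 s' s hs' hs (by omega) heq.symm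
  have hTcard : (insert 1 (insert (n - 1) (Finset.Icc 2 (n / 2)))).card = 1 + n / 2 := by
    have h1 : (n : ℕ) - 1 ∉ Finset.Icc 2 (n / 2) := by
      rw [Finset.mem_Icc]
      omega
    have h2 : (1 : ℕ) ∉ insert (n - 1) (Finset.Icc 2 (n / 2)) := by
      rw [Finset.mem_insert, Finset.mem_Icc]
      omega
    rw [Finset.card_insert_of_notMem h2, Finset.card_insert_of_notMem h1, Nat.card_Icc]
    omega
  unfold dNum
  rw [hDSetEq, Set.ncard_coe_finset, Finset.card_image_of_injOn hinjOn, hTcard]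

end TypeWProof

/-- A poset of type 𝒲 of size `2n − 2` with at most `n − 1` minimal elements
has exactly `1 + ⌊n/2⌋` isomorphism classes of downsets of size `n`. -/
theorem typeW_dNum (n : ℕ) (P : FinPartOrd.{0}) (hW : TypeW P)
    (hsize : size P = 2 * n - 2)
    (hminel : (Finset.univ.filter fun x : ↥P => ∀ y : ↥P, y ≤ x → y = x).card ≤ n - 1) :
    dNum n P = 1 + n / 2 := by
  obtain ⟨W₁, W₂, hunion, hdisj, hincomp, hconn₁, hconn₂, hnewt₁, hnewt₂, hniso,
    x, y, hx, hy, hψ⟩ := hW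
  obtain ⟨ψ⟩ := hψ
  rcases le_total (heightEl P x) (heightEl P y) with h | h
  · exact TypeWProof.main n P W₁ W₂ hunion hdisj hincomp hconn₁ hnewt₁ hnewt₂ hniso
      x y hx hy ψ hsize hminel h
  · refine TypeWProof.main n P W₂ W₁ ?_ hdisj.symm ?_ hconn₂ hnewt₂ hnewt₁ ?_
      y x hy hx ψ.symm hsize hminel h
    · rw [Finset.union_comm]
      exact hunion
    · exact fun a ha b hb => ⟨(hincomp b hb a ha).2, (hincomp b hb a ha).1⟩
    · rintro ⟨e⟩
      exact hniso ⟨e.symm⟩
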